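/- arXiv:2605.17067 — 7 statements merged into one kernel-verified Lean document; each statement's English description precedes it below -/
import Mathlib

section
/- Let U and G be n×n complex unitary matrices. Suppose there exists φ ∈ (0, π) such that every eigenvalue of U can be written as e^{iθ} with θ ∈ [−π+φ, π−φ], and suppose ‖G − U‖ ≤ ε₀ where 0 ≤ ε₀ < 2·sin(φ/2). Then every eigenvalue of G can be written as e^{iψ} with |ψ| ≤ π − (φ − 2·arcsin(ε₀/2)); in particular, −1 is not an eigenvalue of G. -/
open scoped Matrix.Norms.L2Operator
open Real Pointwise

noncomputable instance auxCSA {n : ℕ} : CStarAlgebra (Matrix (Fin n) (Fin n) ℂ) := Matrix.instCStarAlgebra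

lemma aux_chord_key (z : ℂ) : 2 * Complex.sin z * Complex.I
    = Complex.exp (z * Complex.I) - Complex.exp (-z * Complex.I) := by
  rw [Complex.sin]
  have := Complex.I_sq
  field_simp
  ring_nf
  rw [Complex.I_sq]
  ring

lemma aux_chord (a b : ℝ) :
    ‖Complex.exp (a * Complex.I) - Complex.exp (b * Complex.I)‖
      = 2 * |Real.sin ((a - b) / 2)| := by
  have h : Complex.exp (a * Complex.I) - Complex.exp (b * Complex.I)
      = Complex.exp ((((a + b) / 2 : ℝ)) * Complex.I)
        * (2 * Complex.sin (((a - b) / 2 : ℝ)) * Complex.I) := by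
    rw [aux_chord_key, mul_sub, ← Complex.exp_add, ← Complex.exp_add]
    push_cast
    ring_nf
  rw [h, norm_mul, Complex.norm_exp_ofReal_mul_I, one_mul]
  rw [← Complex.ofReal_sin, norm_mul, norm_mul, Complex.norm_two, Complex.norm_real,
    Complex.norm_I, mul_one, Real.norm_eq_abs]

lemma aux_angle (φ ε₀ ψ θ : ℝ) (hφ0 : 0 < φ) (hφπ : φ < π) (hε0 : 0 ≤ ε₀)
    (hε' : ε₀ < 2 * Real.sin (φ / 2)) (hψ : |ψ| ≤ π) (hθ : |θ| ≤ π - φ)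
    (hsin : |Real.sin ((ψ - θ) / 2)| ≤ ε₀ / 2) :
    |ψ| ≤ π - (φ - 2 * Real.arcsin (ε₀ / 2)) := by
  set α := Real.arcsin (ε₀ / 2) with hα
  have hsφ : 0 < Real.sin (φ / 2) :=
    Real.sin_pos_of_pos_of_lt_pi (by linarith) (by linarith [Real.pi_pos])
  have hε1 : ε₀ / 2 ≤ 1 := by nlinarith [Real.sin_le_one (φ / 2)]
  have hα0 : 0 ≤ α := Real.arcsin_nonneg.mpr (by linarith)
  have hαπ2 : α ≤ π / 2 := Real.arcsin_le_pi_div_two _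
  have hαlt : α < φ / 2 :=
    (Real.arcsin_lt_iff_lt_sin ⟨by linarith, hε1⟩ ⟨by linarith, by linarith⟩).mpr (by linarith)
  have hsinα : Real.sin α = ε₀ / 2 := Real.sin_arcsin (by linarith) hε1
  set δ := ψ - θ with hδ
  have hψ1 := abs_le.mp hψ
  have hθ1 := abs_le.mp hθ
  rcases le_or_gt |δ| π with hcase | hcase
  · have hδ1 := abs_le.mp hcase
    have h1 : Real.sin (|δ| / 2) ≤ ε₀ / 2 := by
      rcases abs_cases δ with ⟨h, hpos⟩ | ⟨h, hneg⟩
      · rw [h]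
        have : 0 ≤ Real.sin (δ / 2) :=
          Real.sin_nonneg_of_nonneg_of_le_pi (by linarith) (by linarith)
        rw [abs_of_nonneg this] at hsin; linarith
      · rw [h]
        have : Real.sin (δ / 2) ≤ 0 :=
          Real.sin_nonpos_of_nonpos_of_neg_pi_le (by linarith) (by linarith)
        rw [abs_of_nonpos this] at hsin
        rw [show -δ / 2 = -(δ / 2) by ring, Real.sin_neg]; linarith
    have h2 : |δ| / 2 ≤ α := by
      have harc := Real.arcsin_sin (x := |δ| / 2) (by linarith [abs_nonneg δ]) (by linarith)
      calc |δ| / 2 = Real.arcsin (Real.sin (|δ| / 2)) := harc.symm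
        _ ≤ α := Real.monotone_arcsin h1
    calc |ψ| = |θ + δ| := by rw [hδ]; ring_nf
      _ ≤ |θ| + |δ| := abs_add_le _ _
      _ ≤ (π - φ) + 2 * α := by linarith
      _ = π - (φ - 2 * α) := by ring
  · exfalso
    rcases abs_cases δ with ⟨heq, hpos⟩ | ⟨heq, hneg⟩
    · have hδπ : π < δ := by rwa [heq] at hcase
      have hδ2π : δ ≤ 2 * π - φ := by rw [hδ]; linarith
      have hs0 : 0 ≤ Real.sin (δ / 2) :=
        Real.sin_nonneg_of_nonneg_of_le_pi (by linarith) (by linarith)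
      have hsb : Real.sin (π - δ / 2) ≤ ε₀ / 2 := by
        rw [Real.sin_pi_sub]
        rw [abs_of_nonneg hs0] at hsin; linarith
      have hββ : π - δ / 2 ≤ α := by
        have harc := Real.arcsin_sin (x := π - δ / 2) (by linarith) (by linarith)
        calc π - δ / 2 = Real.arcsin (Real.sin (π - δ / 2)) := harc.symm
          _ ≤ α := Real.monotone_arcsin hsb
      linarith
    · have hδπ : π < -δ := by rwa [heq] at hcase
      have hδ2π : -δ ≤ 2 * π - φ := by rw [hδ]; linarith
      have hs0 : 0 ≤ Real.sin (-δ / 2) :=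
        Real.sin_nonneg_of_nonneg_of_le_pi (by linarith) (by linarith)
      have hsb : Real.sin (π - -δ / 2) ≤ ε₀ / 2 := by
        rw [Real.sin_pi_sub]
        rw [show -δ / 2 = -(δ / 2) by ring, Real.sin_neg] at hs0 ⊢
        rw [abs_of_nonpos (by linarith)] at hsin; linarith
      have hββ : π - -δ / 2 ≤ α := by
        have harc := Real.arcsin_sin (x := π - -δ / 2) (by linarith) (by linarith)
        calc π - -δ / 2 = Real.arcsin (Real.sin (π - -δ / 2)) := harc.symm
          _ ≤ α := Real.monotone_arcsin hsb
      linarith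


lemma aux_isStarNormal_inv' {M : Type*} [Monoid M] [StarMul M] (u : Mˣ)
    (h : Commute (star (u : M)) (u : M)) : Commute (star ((u⁻¹ : Mˣ) : M)) ((u⁻¹ : Mˣ) : M) := by
  have h1 : Commute ((star u : Mˣ) : M) (u : M) := by rwa [Units.coe_star]
  have h2 : Commute (((star u)⁻¹ : Mˣ) : M) ((u⁻¹ : Mˣ) : M) :=
    (h1.units_inv_right).units_inv_left
  rwa [Units.coe_star_inv] at h2

lemma aux_spec_close {n : ℕ} (U G : Matrix (Fin n) (Fin n) ℂ)
    (hU : U ∈ Matrix.unitaryGroup (Fin n) ℂ)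
    (ε : ℝ) (hε : 0 ≤ ε) (hGU : ‖G - U‖ ≤ ε)
    (z : ℂ) (hz : z ∈ spectrum ℂ G) :
    ∃ lam ∈ spectrum ℂ U, ‖z - lam‖ ≤ ε := by
  have hnt : Nontrivial (Matrix (Fin n) (Fin n) ℂ) := by
    rcases subsingleton_or_nontrivial (Matrix (Fin n) (Fin n) ℂ) with h | h
    · exact absurd (isUnit_of_subsingleton _) (spectrum.mem_iff.mp hz)
    · exact h
  have hcpt : IsCompact (spectrum ℂ U) := spectrum.isCompact U
  have hne : (spectrum ℂ U).Nonempty := spectrum.nonempty U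
  obtain ⟨lam, hlam, hd⟩ := hcpt.exists_infDist_eq_dist hne z
  refine ⟨lam, hlam, ?_⟩
  rw [← Complex.dist_eq, ← hd]
  by_contra hcon
  push_neg at hcon
  set d := Metric.infDist z (spectrum ℂ U) with hdd
  have hd0 : 0 < d := lt_of_le_of_lt hε hcon
  set a : Matrix (Fin n) (Fin n) ℂ := algebraMap ℂ (Matrix (Fin n) (Fin n) ℂ) z - U with ha
  have hspa : {z} - spectrum ℂ U = spectrum ℂ a := spectrum.singleton_sub_eq U z
  have hmem : ∀ μ ∈ spectrum ℂ a, d ≤ ‖μ‖ := by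
    intro μ hμ
    rw [← hspa] at hμ
    obtain ⟨x, hx, y, hy, hxy⟩ := hμ
    simp only [Set.mem_singleton_iff] at hx
    subst hx
    rw [← hxy, ← Complex.dist_eq]
    exact Metric.infDist_le_dist_of_mem hy
  have hunit : IsUnit a := by
    have h0 : (0 : ℂ) ∉ spectrum ℂ a := by
      intro h0
      have := hmem 0 h0
      simp at this
      linarith
    have := spectrum.notMem_iff.mp h0
    rw [map_zero, zero_sub] at this
    exact (IsUnit.neg_iff a).mp this
  obtain ⟨ua, hua⟩ := hunit
  have hUU : Commute (star U) U := hU.1.trans hU.2.symm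
  have hna : Commute (star a) a := by
    have hsa : star a = algebraMap ℂ (Matrix (Fin n) (Fin n) ℂ) (star z) - star U := by
      rw [ha, star_sub, algebraMap_star_comm]
    have c1 : Commute (algebraMap ℂ (Matrix (Fin n) (Fin n) ℂ) (star z))
        (algebraMap ℂ (Matrix (Fin n) (Fin n) ℂ) z - U) := Algebra.commutes _ _
    have c2 : Commute (star U) (algebraMap ℂ (Matrix (Fin n) (Fin n) ℂ) z) :=
      (Algebra.commutes z (star U)).symm
    rw [hsa, ← ha] at *
    exact c1.sub_left (c2.sub_right hUU)
  set b : Matrix (Fin n) (Fin n) ℂ := ((ua⁻¹ : _) : Matrix (Fin n) (Fin n) ℂ) with hb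
  have hnb : Commute (star b) b := by
    have := aux_isStarNormal_inv' ua (by rwa [hua])
    rwa [← hb] at this
  haveI : IsStarNormal b := ⟨hnb⟩
  have hbnorm : ‖b‖ ≤ d⁻¹ := by
    have hsr : spectralRadius ℂ b = ‖b‖₊ := IsStarNormal.spectralRadius_eq_nnnorm b
    have hsup : spectralRadius ℂ b ≤ ENNReal.ofReal d⁻¹ := by
      rw [spectralRadius]
      refine iSup₂_le fun k hk => ?_
      have hk' : k⁻¹ ∈ spectrum ℂ a := by
        have hinv : (spectrum ℂ ((ua : _) : Matrix (Fin n) (Fin n) ℂ))⁻¹ = spectrum ℂ b :=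
          spectrum.map_inv ua
        rw [← hinv] at hk
        rw [← hua]
        exact Set.mem_inv.mp hk
      have hdk : d ≤ ‖k⁻¹‖ := hmem _ hk'
      have hk0 : k ≠ 0 := by
        intro h
        rw [h] at hdk
        simp at hdk
        linarith
      have hkle : ‖k‖ ≤ d⁻¹ := by
        rw [norm_inv] at hdk
        rw [← inv_inv ‖k‖]
        exact inv_anti₀ hd0 hdk
      calc (‖k‖₊ : ENNReal) = ENNReal.ofReal ‖k‖ := (ofReal_norm k).symm
        _ ≤ ENNReal.ofReal d⁻¹ := ENNReal.ofReal_le_ofReal hkle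
    rw [hsr] at hsup
    exact (ENNReal.ofReal_le_ofReal_iff (by positivity)).mp
      (le_trans (le_of_eq (ofReal_norm b)) hsup)
  have hsmall : ‖b * (G - U)‖ < 1 := by
    calc ‖b * (G - U)‖ ≤ ‖b‖ * ‖G - U‖ := norm_mul_le _ _
      _ ≤ d⁻¹ * ε := mul_le_mul hbnorm hGU (norm_nonneg _) (by positivity)
      _ < 1 := by
          rw [inv_mul_lt_iff₀ hd0, mul_one]
          exact hcon
  have hfac : algebraMap ℂ (Matrix (Fin n) (Fin n) ℂ) z - G = a * (1 - b * (G - U)) := by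
    rw [mul_sub, mul_one, ← mul_assoc]
    have hab : a * b = 1 := by rw [← hua, hb]; exact ua.mul_inv
    rw [hab, one_mul, ha]
    abel
  have hzu : IsUnit (algebraMap ℂ (Matrix (Fin n) (Fin n) ℂ) z - G) := by
    rw [hfac]
    exact (hua ▸ ua.isUnit).mul (Units.oneSub _ hsmall).isUnit
  exact (spectrum.mem_iff.mp hz) hzu

/-- Spectral stability of unitaries: if every eigenvalue of the unitary `U` has phase in
`[-π+φ, π-φ]` and `‖G - U‖ ≤ ε₀ < 2 sin(φ/2)` for a unitary `G`, then every eigenvalue of `G`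
has phase of absolute value at most `π - (φ - 2 arcsin(ε₀/2))`; in particular `-1` is not an
eigenvalue of `G`. -/
theorem stmt_0 {n : ℕ} (U G : Matrix (Fin n) (Fin n) ℂ)
    (hU : U ∈ Matrix.unitaryGroup (Fin n) ℂ) (hG : G ∈ Matrix.unitaryGroup (Fin n) ℂ)
    (φ : ℝ) (hφ : φ ∈ Set.Ioo 0 π)
    (hspecU : ∀ z ∈ spectrum ℂ U, ∃ θ : ℝ,
      θ ∈ Set.Icc (-π + φ) (π - φ) ∧ z = Complex.exp (θ * Complex.I))
    (ε₀ : ℝ) (hε₀ : 0 ≤ ε₀) (hε₀' : ε₀ < 2 * Real.sin (φ / 2))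
    (hGU : ‖G - U‖ ≤ ε₀) :
    (∀ z ∈ spectrum ℂ G, ∃ ψ : ℝ,
      |ψ| ≤ π - (φ - 2 * Real.arcsin (ε₀ / 2)) ∧ z = Complex.exp (ψ * Complex.I)) ∧
    (-1 : ℂ) ∉ spectrum ℂ G := by
  obtain ⟨hφ0, hφπ⟩ := hφ
  have main : ∀ z ∈ spectrum ℂ G, ∃ ψ : ℝ,
      |ψ| ≤ π - (φ - 2 * Real.arcsin (ε₀ / 2)) ∧ z = Complex.exp (ψ * Complex.I) := by
    intro z hz
    have habs : ‖z‖ = 1 := by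
      have hmem := spectrum.subset_circle_of_unitary hG hz
      simpa [Complex.dist_eq] using hmem
    have hzeq : z = Complex.exp (z.arg * Complex.I) := by
      conv_lhs => rw [← Complex.norm_mul_exp_arg_mul_I z]
      rw [habs, Complex.ofReal_one, one_mul]
    obtain ⟨lam, hlam, hdist⟩ := aux_spec_close U G hU ε₀ hε₀ hGU z hz
    obtain ⟨θ, hθmem, hθeq⟩ := hspecU lam hlam
    have hθabs : |θ| ≤ π - φ := abs_le.mpr ⟨by linarith [hθmem.1], hθmem.2⟩
    have hsin : |Real.sin ((z.arg - θ) / 2)| ≤ ε₀ / 2 := by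
      have := hdist
      rw [hzeq, hθeq, aux_chord] at this
      linarith
    exact ⟨z.arg, aux_angle φ ε₀ z.arg θ hφ0 hφπ hε₀ hε₀'
      (Complex.abs_arg_le_pi z) hθabs hsin, hzeq⟩
  refine ⟨main, fun hmem => ?_⟩
  obtain ⟨ψ, hψle, hψeq⟩ := main _ hmem
  have hcos : Real.cos ψ = -1 := by
    have := congrArg Complex.re hψeq
    rwa [Complex.exp_ofReal_mul_I_re, Complex.neg_re, Complex.one_re, eq_comm] at this
  have hsφ : 0 < Real.sin (φ / 2) :=
    Real.sin_pos_of_pos_of_lt_pi (by linarith) (by linarith [Real.pi_pos])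
  have hε1 : ε₀ / 2 ≤ 1 := by nlinarith [Real.sin_le_one (φ / 2)]
  have hαlt : Real.arcsin (ε₀ / 2) < φ / 2 :=
    (Real.arcsin_lt_iff_lt_sin ⟨by linarith, hε1⟩ ⟨by linarith, by linarith⟩).mpr (by linarith)
  have hψπ : |ψ| < π := by linarith
  have : Real.cos π < Real.cos |ψ| :=
    Real.cos_lt_cos_of_nonneg_of_le_pi (abs_nonneg ψ) le_rfl hψπ
  rw [Real.cos_pi, Real.cos_abs, hcos] at this
  exact lt_irrefl _ this
end

section
/- Let X₁, …, X_m be n×n Hermitian complex matrices with ∑_{j=1}^m ‖X_j‖ < π. Then there exists a Hermitian matrix Z with ‖Z‖ ≤ ∑_{j=1}^m ‖X_j‖ such that exp(−i·Z) = exp(−i·X₁)·exp(−i·X₂)···exp(−i·X_m). -/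
open scoped Matrix.Norms.L2Operator
open Real

namespace Stmt5Aux

/-- chord length in terms of half-angle sine -/
lemma abs_cos_sin_sub_one (θ : ℝ) :
    ‖((Real.cos θ : ℂ) + (Real.sin θ : ℂ) * Complex.I - 1)‖
      = 2 * |Real.sin (θ / 2)| := by
  have h1 : ((Real.cos θ : ℂ) + (Real.sin θ : ℂ) * Complex.I - 1)
      = ((Real.cos θ - 1 : ℝ) : ℂ) + ((Real.sin θ : ℝ) : ℂ) * Complex.I := by
    push_cast; ring
  rw [h1, Complex.norm_add_mul_I]
  have hcos : Real.cos θ = 1 - 2 * Real.sin (θ / 2) ^ 2 := by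
    have h2 := Real.cos_two_mul (θ / 2)
    have h2' : 2 * (θ / 2) = θ := by ring
    rw [h2'] at h2
    have h3 := Real.sin_sq_add_cos_sq (θ / 2)
    nlinarith
  have h4 : (Real.cos θ - 1) ^ 2 + Real.sin θ ^ 2 = (2 * |Real.sin (θ / 2)|) ^ 2 := by
    have h5 := Real.sin_sq_add_cos_sq θ
    have h6 : |Real.sin (θ / 2)| ^ 2 = Real.sin (θ / 2) ^ 2 := sq_abs _
    nlinarith
  rw [h4, Real.sqrt_sq (by positivity)]

/-- For a unit complex number, `|z - 1| = 2 sin(|arg z| / 2)`. -/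
lemma abs_sub_one_eq (z : ℂ) (hz : ‖z‖ = 1) :
    ‖z - 1‖ = 2 * Real.sin (|z.arg| / 2) := by
  have hz' : (Real.cos z.arg : ℂ) + (Real.sin z.arg : ℂ) * Complex.I = z := by
    have h := Complex.norm_mul_cos_add_sin_mul_I z
    rw [hz] at h
    simpa using h
  conv_lhs => rw [← hz']
  rw [abs_cos_sin_sub_one]
  have hpi := Complex.abs_arg_le_pi z
  have harg := Complex.neg_pi_lt_arg z
  congr 1
  rcases abs_cases z.arg with ⟨h1, h2⟩ | ⟨h1, h2⟩
  · rw [abs_of_nonneg (Real.sin_nonneg_of_nonneg_of_le_pi (by linarith)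
      (by rcases abs_cases z.arg with ⟨h3,_⟩|⟨h3,_⟩ <;> linarith)), h1]
  · have hs : Real.sin (z.arg / 2) ≤ 0 :=
      Real.sin_nonpos_of_nonpos_of_neg_pi_le (by linarith) (by linarith)
    rw [abs_of_nonpos hs, ← Real.sin_neg, h1]
    ring_nf

/-- For a unit complex number, `|arg z| = 2 arcsin (|z - 1| / 2)`. -/
lemma abs_arg_eq (z : ℂ) (hz : ‖z‖ = 1) :
    |z.arg| = 2 * Real.arcsin (‖z - 1‖ / 2) := by
  rw [abs_sub_one_eq z hz]
  have h1 : 2 * Real.sin (|z.arg| / 2) / 2 = Real.sin (|z.arg| / 2) := by ring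
  have hpi := Complex.abs_arg_le_pi z
  have hnn : (0:ℝ) ≤ |z.arg| := abs_nonneg _
  have hpi0 := Real.pi_pos
  rw [h1, Real.arcsin_sin (by linarith)
    (by rcases abs_cases z.arg with ⟨h,_⟩|⟨h,_⟩ <;> linarith)]
  ring

/-- Subadditivity of `|arg|` under multiplication. -/
lemma abs_arg_mul_le {x y : ℂ} (hx : x ≠ 0) (hy : y ≠ 0) :
    |(x * y).arg| ≤ |x.arg| + |y.arg| := by
  by_cases h : x.arg + y.arg ∈ Set.Ioc (-π) π
  · rw [Complex.arg_mul hx hy h]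
    exact abs_add_le _ _
  · have h1 := Complex.abs_arg_le_pi (x * y)
    have h2 : π ≤ |x.arg| + |y.arg| := by
      simp only [Set.mem_Ioc, not_and_or, not_lt, not_le] at h
      calc π ≤ |x.arg + y.arg| := by
              rcases h with h | h
              · rw [abs_of_nonpos (by linarith [Real.pi_pos])]; linarith
              · rw [abs_of_pos (by linarith [Real.pi_pos])]; linarith
        _ ≤ |x.arg| + |y.arg| := abs_add_le _ _
    linarith


variable {n : ℕ}

lemma nontrivial_matrix (hn : 0 < n) : Nontrivial (Matrix (Fin n) (Fin n) ℂ) := by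
  haveI : Nonempty (Fin n) := ⟨⟨0, hn⟩⟩
  infer_instance

/-- Spectral perturbation for normal elements. -/
lemma exists_near (hn : 0 < n) (a p : Matrix (Fin n) (Fin n) ℂ) (hp : IsStarNormal p) {lam : ℂ}
    (hlam : lam ∈ spectrum ℂ a) :
    ∃ μ ∈ spectrum ℂ p, ‖lam - μ‖ ≤ ‖a - p‖ := by
  haveI := nontrivial_matrix hn
  by_contra hcon
  push_neg at hcon
  have hne : (spectrum ℂ p).Nonempty := spectrum.nonempty p
  have hcpt : IsCompact (spectrum ℂ p) := spectrum.isCompact p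
  obtain ⟨μ0, hμ0, hmin⟩ := hcpt.exists_isMinOn hne
    (((continuous_const.sub continuous_id).norm).continuousOn :
      ContinuousOn (fun μ : ℂ => ‖lam - μ‖) (spectrum ℂ p))
  set d : ℝ := ‖lam - μ0‖ with hd_def
  have hd : ‖a - p‖ < d := hcon μ0 hμ0
  have hd0 : (0:ℝ) < d := lt_of_le_of_lt (norm_nonneg _) hd
  have hne0 : ∀ z ∈ spectrum ℂ p, lam - z ≠ 0 := by
    intro z hz h0
    have := hcon z hz
    rw [h0] at this
    simp only [norm_zero] at this
    exact absurd this (not_lt.mpr (norm_nonneg _))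
  set f : ℂ → ℂ := fun z => (lam - z)⁻¹ with hf_def
  have hf : ContinuousOn f (spectrum ℂ p) :=
    ContinuousOn.inv₀ ((continuous_const.sub continuous_id).continuousOn) hne0
  set r := cfc f p with hr_def
  have h2 : cfc (fun z : ℂ => lam - z) p = algebraMap ℂ (Matrix (Fin n) (Fin n) ℂ) lam - p := by
    rw [cfc_sub (fun _ : ℂ => lam) (fun z : ℂ => z) p, cfc_const lam p, cfc_id' ℂ p]
  have hmul1 : r * (algebraMap ℂ (Matrix (Fin n) (Fin n) ℂ) lam - p) = 1 := by
    rw [← h2, hr_def, ← cfc_mul f (fun z : ℂ => lam - z) p]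
    have : (spectrum ℂ p).EqOn (fun z => f z * (lam - z)) (fun _ => 1) := by
      intro z hz
      simp only [hf_def]
      exact inv_mul_cancel₀ (hne0 z hz)
    rw [cfc_congr this, cfc_const_one ℂ p]
  have hmul2 : (algebraMap ℂ (Matrix (Fin n) (Fin n) ℂ) lam - p) * r = 1 := by
    rw [← h2, hr_def, ← cfc_mul (fun z : ℂ => lam - z) f p]
    have : (spectrum ℂ p).EqOn (fun z => (lam - z) * f z) (fun _ => 1) := by
      intro z hz
      simp only [hf_def]
      exact mul_inv_cancel₀ (hne0 z hz)
    rw [cfc_congr this, cfc_const_one ℂ p]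
  have hrnorm : ‖r‖ ≤ d⁻¹ := by
    refine norm_cfc_le (by positivity) fun z hz => ?_
    have hdz : d ≤ ‖lam - z‖ := isMinOn_iff.mp hmin z hz
    rw [hf_def]
    simp only [norm_inv]
    exact inv_anti₀ hd0 hdz
  have hsmall : ‖r * (a - p)‖ < 1 :=
    calc ‖r * (a - p)‖ ≤ ‖r‖ * ‖a - p‖ := norm_mul_le _ _
      _ ≤ d⁻¹ * ‖a - p‖ := mul_le_mul_of_nonneg_right hrnorm (norm_nonneg _)
      _ < d⁻¹ * d := by
          exact mul_lt_mul_of_pos_left hd (inv_pos.mpr hd0)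
      _ = 1 := inv_mul_cancel₀ hd0.ne'
  have hu1 : IsUnit (1 - r * (a - p)) := ⟨Units.oneSub _ hsmall, rfl⟩
  have hu2 : IsUnit (algebraMap ℂ (Matrix (Fin n) (Fin n) ℂ) lam - p) :=
    ⟨⟨_, r, hmul2, hmul1⟩, rfl⟩
  have key : algebraMap ℂ (Matrix (Fin n) (Fin n) ℂ) lam - a
      = (algebraMap ℂ (Matrix (Fin n) (Fin n) ℂ) lam - p) * (1 - r * (a - p)) := by
    rw [mul_sub, mul_one, ← mul_assoc, hmul2, one_mul]
    abel
  exact (spectrum.mem_iff.mp hlam) (key ▸ hu2.mul hu1)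


/-- Sharp norm bound for `exp(-iX) - 1` for Hermitian `X`. -/
lemma norm_exp_sub_one_le (hn : 0 < n) (X : Matrix (Fin n) (Fin n) ℂ) (hX : X.IsHermitian)
    (hXpi : ‖X‖ ≤ π) :
    ‖NormedSpace.exp ((-Complex.I) • X) - 1‖ ≤ 2 * Real.sin (‖X‖ / 2) := by
  haveI := nontrivial_matrix hn
  have hsa : IsSelfAdjoint X := hX.isSelfAdjoint
  haveI hnorm : IsStarNormal X := hsa.isStarNormal
  have hpi := Real.pi_pos
  haveI hns : IsStarNormal ((-Complex.I) • X) := by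
    have hstar : star ((-Complex.I) • X) = Complex.I • X := by
      rw [star_smul, hsa.star_eq]
      congr 1
      simp [Complex.star_def]
    constructor
    rw [hstar]
    exact (((Commute.refl X).smul_left Complex.I).smul_right (-Complex.I))
  have hkey : NormedSpace.exp ((-Complex.I) • X)
      = cfc (fun z : ℂ => Complex.exp ((-Complex.I) * z)) X := by
    have h1 : cfc (fun z : ℂ => (-Complex.I) * z) X = (-Complex.I) • X :=
      cfc_const_mul_id (-Complex.I) X
    rw [← CFC.complex_exp_eq_normedSpace_exp (a := (-Complex.I) • X), ← h1,
      ← cfc_comp' Complex.exp (fun z : ℂ => (-Complex.I) * z) X]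
  have hsub : cfc (fun z : ℂ => Complex.exp ((-Complex.I) * z) - 1) X
      = NormedSpace.exp ((-Complex.I) • X) - 1 := by
    rw [cfc_sub (fun z : ℂ => Complex.exp ((-Complex.I) * z)) (fun _ : ℂ => (1 : ℂ)) X,
      cfc_const_one ℂ X, hkey]
  rw [← hsub]
  have hs0 : 0 ≤ Real.sin (‖X‖ / 2) :=
    Real.sin_nonneg_of_nonneg_of_le_pi (by positivity) (by linarith)
  refine norm_cfc_le (by linarith) fun z hz => ?_
  have hz' : z = (z.re : ℂ) := hsa.mem_spectrum_eq_re hz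
  set t : ℝ := z.re with ht_def
  have ht : |t| ≤ ‖X‖ := by
    have h1 : ‖z‖ ≤ ‖X‖ := spectrum.norm_le_norm_of_mem hz
    rw [hz'] at h1
    simpa using h1
  have hcalc : Complex.exp ((-Complex.I) * z)
      = (Real.cos (-t) : ℂ) + (Real.sin (-t) : ℂ) * Complex.I := by
    conv_lhs => rw [hz']
    have h2 : (-Complex.I) * ((t : ℝ) : ℂ) = ((-t : ℝ) : ℂ) * Complex.I := by
      push_cast; ring
    rw [h2, Complex.exp_mul_I]
    norm_cast
  rw [hcalc, abs_cos_sin_sub_one (-t)]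
  have habs : |Real.sin (-t / 2)| = Real.sin (|t| / 2) := by
    rcases abs_cases t with ⟨h1, h2⟩ | ⟨h1, h2⟩
    · have hle : Real.sin (-t / 2) ≤ 0 :=
        Real.sin_nonpos_of_nonpos_of_neg_pi_le (by linarith) (by
          have : t ≤ π := le_trans (le_trans (le_abs_self t) ht) hXpi
          linarith)
      rw [abs_of_nonpos hle, h1, ← Real.sin_neg]
      ring_nf
    · have hge : 0 ≤ Real.sin (-t / 2) := by
        apply Real.sin_nonneg_of_nonneg_of_le_pi (by linarith)
        have : -t ≤ π := by
          have := (abs_le.mp ht).1; linarith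
        linarith
      rw [abs_of_nonneg hge, h1]
  rw [habs]
  have hmono : Real.sin (|t| / 2) ≤ Real.sin (‖X‖ / 2) := by
    apply Real.sin_le_sin_of_le_of_le_pi_div_two (by linarith [abs_nonneg t]) (by linarith)
    linarith
  linarith

/-- Key induction: the argument of any spectral value of a product of unitaries is bounded
by the sum of the angular sizes of the factors. -/
lemma spec_prod (hn : 0 < n) :
    ∀ L : List (Matrix (Fin n) (Fin n) ℂ),
      (∀ V ∈ L, V ∈ unitary (Matrix (Fin n) (Fin n) ℂ)) →
      ∀ lam ∈ spectrum ℂ L.prod,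
        |lam.arg| ≤ (L.map (fun V => 2 * Real.arcsin (‖V - 1‖ / 2))).sum := by
  haveI := nontrivial_matrix hn
  intro L
  induction L with
  | nil =>
    intro _ lam hlam
    simp only [List.prod_nil] at hlam
    rw [spectrum.one_eq] at hlam
    simp only [Set.mem_singleton_iff] at hlam
    simp [hlam]
  | cons V L ih =>
    intro hL lam hlam
    have hV : V ∈ unitary (Matrix (Fin n) (Fin n) ℂ) := hL V List.mem_cons_self
    have hLrest : ∀ W ∈ L, W ∈ unitary (Matrix (Fin n) (Fin n) ℂ) :=
      fun W hW => hL W (List.mem_cons_of_mem V hW)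
    have hP : L.prod ∈ unitary (Matrix (Fin n) (Fin n) ℂ) :=
      list_prod_mem hLrest
    rw [List.prod_cons] at hlam
    have hVP : V * L.prod ∈ unitary (Matrix (Fin n) (Fin n) ℂ) := mul_mem hV hP
    haveI hPn : IsStarNormal L.prod := isStarNormal_of_mem_unitary hP
    have hlam1 : ‖lam‖ = 1 := by
      simpa using spectrum.subset_circle_of_unitary hVP hlam
    obtain ⟨μ, hμ, hdist⟩ := exists_near hn (V * L.prod) L.prod hPn hlam
    have hμ1 : ‖μ‖ = 1 := by
      simpa using spectrum.subset_circle_of_unitary hP hμ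
    have hdist' : ‖lam - μ‖ ≤ ‖V - 1‖ := by
      refine hdist.trans ?_
      have h3 : V * L.prod - L.prod = (V - 1) * L.prod := by
        rw [sub_mul, one_mul]
      rw [h3]
      calc ‖(V - 1) * L.prod‖ ≤ ‖V - 1‖ * ‖L.prod‖ := norm_mul_le _ _
        _ = ‖V - 1‖ := by rw [CStarRing.norm_of_mem_unitary hP, mul_one]
    have hμ0 : μ ≠ 0 := by
      intro h; rw [h] at hμ1; simp at hμ1
    have hlam0 : lam ≠ 0 := by
      intro h; rw [h] at hlam1; simp at hlam1
    have hconjμ : (starRingEnd ℂ) μ * μ = 1 := by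
      rw [mul_comm, Complex.mul_conj]
      norm_cast
      rw [← Complex.sq_norm]
      rw [hμ1]
      norm_num
    have hw : lam = lam * (starRingEnd ℂ) μ * μ := by
      rw [mul_assoc, hconjμ, mul_one]
    have hconjμ0 : (starRingEnd ℂ) μ ≠ 0 := by
      simpa using hμ0
    have harg : |lam.arg| ≤ |(lam * (starRingEnd ℂ) μ).arg| + |μ.arg| := by
      conv_lhs => rw [hw]
      exact abs_arg_mul_le (mul_ne_zero hlam0 hconjμ0) hμ0
    have hw1 : ‖lam * (starRingEnd ℂ) μ‖ = 1 := by
      rw [norm_mul, Complex.norm_conj]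
      rw [hlam1, hμ1]
      norm_num
    have hw2 : ‖lam * (starRingEnd ℂ) μ - 1‖ = ‖lam - μ‖ := by
      have h4 : lam * (starRingEnd ℂ) μ - 1 = (starRingEnd ℂ) μ * (lam - μ) := by
        rw [mul_sub, hconjμ]
        ring
      rw [h4, norm_mul, Complex.norm_conj, hμ1, one_mul]
    have hterm : |(lam * (starRingEnd ℂ) μ).arg| ≤ 2 * Real.arcsin (‖V - 1‖ / 2) := by
      rw [abs_arg_eq _ hw1, hw2]
      have hm : Real.arcsin (‖lam - μ‖ / 2) ≤ Real.arcsin (‖V - 1‖ / 2) :=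
        Real.monotone_arcsin (by linarith)
      linarith
    have hihμ := ih hLrest μ hμ
    rw [List.map_cons, List.sum_cons]
    linarith

end Stmt5Aux

/-- Magnus-expansion norm bound: if `X 1, …, X m` are Hermitian with `∑ ‖X j‖ < π`, then
the ordered product `exp(-i·X 1) ⋯ exp(-i·X m)` equals `exp(-i·Z)` for some Hermitian `Z`
with `‖Z‖ ≤ ∑ ‖X j‖`. -/
theorem stmt_5 {n m : ℕ} (X : Fin m → Matrix (Fin n) (Fin n) ℂ)
    (hX : ∀ j, (X j).IsHermitian)
    (hsum : ∑ j, ‖X j‖ < π) :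
    ∃ Z : Matrix (Fin n) (Fin n) ℂ, Z.IsHermitian ∧ ‖Z‖ ≤ ∑ j, ‖X j‖ ∧
      NormedSpace.exp ((-Complex.I) • Z)
        = (List.ofFn fun j => NormedSpace.exp ((-Complex.I) • X j)).prod := by
  have hs0 : (0:ℝ) ≤ ∑ j, ‖X j‖ := Finset.sum_nonneg fun j _ => norm_nonneg _
  have hpi := Real.pi_pos
  rcases Nat.eq_zero_or_pos n with hn | hn
  · subst hn
    refine ⟨0, Matrix.isHermitian_zero, by simpa using hs0, Subsingleton.elim _ _⟩
  · haveI := Stmt5Aux.nontrivial_matrix hn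
    set s : ℝ := ∑ j, ‖X j‖ with hs_def
    set L : List (Matrix (Fin n) (Fin n) ℂ) :=
      List.ofFn (fun j => NormedSpace.exp ((-Complex.I) • X j)) with hL
    have hunit : ∀ V ∈ L, V ∈ unitary (Matrix (Fin n) (Fin n) ℂ) := by
      intro V hV
      rw [hL, List.mem_ofFn] at hV
      obtain ⟨j, rfl⟩ := hV
      let +nondep : NormedAlgebra ℚ (Matrix (Fin n) (Fin n) ℂ) := .restrictScalars ℚ ℂ _
      apply NormedSpace.exp_mem_unitary_of_mem_skewAdjoint
      rw [skewAdjoint.mem_iff, star_smul, (hX j).isSelfAdjoint.star_eq, ← neg_smul]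
      congr 1
      simp [Complex.star_def]
    set U : Matrix (Fin n) (Fin n) ℂ := L.prod with hU
    have hUmem : U ∈ unitary (Matrix (Fin n) (Fin n) ℂ) := list_prod_mem hunit
    haveI : IsStarNormal U := isStarNormal_of_mem_unitary hUmem
    have hspec : ∀ lam ∈ spectrum ℂ U, ‖lam‖ = 1 ∧ |lam.arg| ≤ s := by
      intro lam hlam
      refine ⟨by simpa using spectrum.subset_circle_of_unitary hUmem hlam, ?_⟩
      refine (Stmt5Aux.spec_prod hn L hunit lam hlam).trans ?_
      rw [hL, List.map_ofFn, List.sum_ofFn]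
      apply Finset.sum_le_sum
      intro j _
      simp only [Function.comp_apply]
      have hXj : ‖X j‖ ≤ π := by
        have h1 : ‖X j‖ ≤ s :=
          Finset.single_le_sum (f := fun j => ‖X j‖) (fun i _ => norm_nonneg _)
            (Finset.mem_univ j)
        linarith
      have hb := Stmt5Aux.norm_exp_sub_one_le hn (X j) (hX j) hXj
      have harc : Real.arcsin (‖NormedSpace.exp ((-Complex.I) • X j) - 1‖ / 2)
          ≤ ‖X j‖ / 2 := by
        have h2 : ‖NormedSpace.exp ((-Complex.I) • X j) - 1‖ / 2
            ≤ Real.sin (‖X j‖ / 2) := by linarith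
        have h3 := Real.monotone_arcsin h2
        rwa [Real.arcsin_sin (by linarith [norm_nonneg (X j)]) (by linarith)] at h3
      linarith
    have hslit : ∀ lam ∈ spectrum ℂ U, lam ∈ Complex.slitPlane := by
      intro lam hlam
      obtain ⟨h1, h2⟩ := hspec lam hlam
      rw [Complex.mem_slitPlane_iff_arg]
      constructor
      · intro h
        rw [h, abs_of_pos hpi] at h2
        linarith
      · intro h
        rw [h] at h1
        simp at h1
    have hne0 : ∀ lam ∈ spectrum ℂ U, lam ≠ 0 := by
      intro lam hlam h
      have := (hspec lam hlam).1
      rw [h] at this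
      simp at this
    have hcont : ContinuousOn (fun z : ℂ => Complex.I * Complex.log z) (spectrum ℂ U) := by
      intro z hz
      exact (continuousAt_const.mul (continuousAt_clog (hslit z hz))).continuousWithinAt
    set Z : Matrix (Fin n) (Fin n) ℂ := cfc (fun z : ℂ => Complex.I * Complex.log z) U with hZ
    have hlog : ∀ lam ∈ spectrum ℂ U, Complex.I * Complex.log lam = ((-lam.arg : ℝ) : ℂ) := by
      intro lam hlam
      obtain ⟨h1, _⟩ := hspec lam hlam
      have habs : ‖lam‖ = 1 := by exact h1
      have hlog1 : Complex.log lam = (lam.arg : ℂ) * Complex.I := by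
        show (Real.log ‖lam‖ : ℂ) + lam.arg * Complex.I = (lam.arg : ℂ) * Complex.I
        rw [habs, Real.log_one]
        simp
      rw [hlog1]
      have : Complex.I * ((lam.arg : ℂ) * Complex.I) = (Complex.I * Complex.I) * lam.arg := by
        ring
      rw [this, Complex.I_mul_I]
      push_cast
      ring
    have hZsa : IsSelfAdjoint Z := by
      rw [hZ, IsSelfAdjoint, ← cfc_star (fun z : ℂ => Complex.I * Complex.log z) U]
      apply cfc_congr
      intro lam hlam
      show star (Complex.I * Complex.log lam) = Complex.I * Complex.log lam
      rw [hlog lam hlam, Complex.star_def, Complex.conj_ofReal]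
    refine ⟨Z, ?_, ?_, ?_⟩
    · rw [Matrix.IsHermitian, ← Matrix.star_eq_conjTranspose]
      exact hZsa
    · refine norm_cfc_le hs0 fun lam hlam => ?_
      rw [hlog lam hlam]
      rw [Complex.norm_real, Real.norm_eq_abs, abs_neg]
      exact (hspec lam hlam).2
    · have h1 : (-Complex.I) • Z = cfc (fun z : ℂ => Complex.log z) U := by
        rw [hZ, ← cfc_smul (-Complex.I) (fun z : ℂ => Complex.I * Complex.log z) U hcont]
        apply cfc_congr
        intro lam hlam
        show (-Complex.I) • (Complex.I * Complex.log lam) = Complex.log lam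
        rw [smul_eq_mul, ← mul_assoc]
        have : -Complex.I * Complex.I = 1 := by
          rw [neg_mul, Complex.I_mul_I, neg_neg]
        rw [this, one_mul]
      haveI : IsStarNormal ((-Complex.I) • Z) := by
        rw [h1]
        exact cfc_predicate _ U
      rw [← CFC.complex_exp_eq_normedSpace_exp (a := (-Complex.I) • Z), h1,
        ← cfc_comp' Complex.exp Complex.log U Complex.continuous_exp.continuousOn
          (by intro z hz; exact (continuousAt_clog (hslit z hz)).continuousWithinAt)]
      have h2 : (spectrum ℂ U).EqOn (fun z => Complex.exp (Complex.log z)) id :=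
        fun lam hlam => Complex.exp_log (hne0 lam hlam)
      rw [cfc_congr h2, cfc_id ℂ U]
end

section
/- For every dimension n and every φ ∈ (0, π) there exists a constant C > 0 such that for all n×n Hermitian complex matrices A and B with ‖A‖ ≤ π − φ and ‖B‖ ≤ π − φ, one has ‖A − B‖ ≤ C·‖exp(−i·A) − exp(−i·B)‖. -/
open scoped Matrix.Norms.L2Operator
open Real Matrix

lemma aux_sin_lb {a t : ℝ} (ha : 0 < a) (haπ : a ≤ π) (ht0 : 0 ≤ t) (hta : t ≤ a) :
    Real.sin a / a * t ≤ Real.sin t := by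
  rcases eq_or_lt_of_le ht0 with h | h
  · simp [← h]
  have hconc := strictConcaveOn_sin_Icc.concaveOn
  have h0 : (0:ℝ) ∈ Set.Icc (0:ℝ) π := by constructor <;> positivity
  have hA : a ∈ Set.Icc (0:ℝ) π := ⟨ha.le, haπ⟩
  have hw1 : (0:ℝ) ≤ 1 - t / a := by
    have : t / a ≤ 1 := (div_le_one ha).2 hta
    linarith
  have hw2 : (0:ℝ) ≤ t / a := by positivity
  have hsum : (1 - t / a) + t / a = 1 := by ring
  have key := hconc.2 h0 hA hw1 hw2 hsum
  simp only [smul_eq_mul, mul_zero, zero_add, Real.sin_zero] at key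
  rw [div_mul_cancel₀ t ha.ne'] at key
  calc Real.sin a / a * t = t / a * Real.sin a := by ring
  _ ≤ Real.sin t := by linarith

lemma aux_abs_sin {s : ℝ} (hs : |s| ≤ π) : |Real.sin s| = Real.sin |s| := by
  rcases le_or_gt 0 s with h | h
  · rw [abs_of_nonneg h,
      abs_of_nonneg (Real.sin_nonneg_of_nonneg_of_le_pi h (by rwa [abs_of_nonneg h] at hs))]
  · have h1 : Real.sin s = -Real.sin (-s) := by rw [Real.sin_neg, neg_neg]
    rw [h1, abs_neg, abs_of_neg h, abs_of_nonneg]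
    exact Real.sin_nonneg_of_nonneg_of_le_pi (by linarith)
      (by rwa [abs_of_neg h] at hs)

lemma aux_cexp_diff (x y : ℝ) :
    ‖Complex.exp (-(x:ℂ) * Complex.I) - Complex.exp (-(y:ℂ) * Complex.I)‖
      = 2 * |Real.sin ((x - y) / 2)| := by
  have key : Complex.exp (-(x:ℂ) * Complex.I) - Complex.exp (-(y:ℂ) * Complex.I)
      = Complex.exp (-(((x:ℂ) + y)/2) * Complex.I) *
        (Complex.exp (-(((x:ℂ) - y)/2) * Complex.I) - Complex.exp ((((x:ℂ) - y)/2) * Complex.I)) := by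
    rw [mul_sub, ← Complex.exp_add, ← Complex.exp_add]
    ring_nf
  have h2 : Complex.exp (-(((x:ℂ) - y)/2) * Complex.I) - Complex.exp ((((x:ℂ) - y)/2) * Complex.I)
      = -(2 * Complex.sin (((x:ℂ) - y)/2) * Complex.I) := by
    rw [Complex.exp_mul_I, Complex.exp_mul_I, Complex.cos_neg, Complex.sin_neg]
    ring
  rw [key, norm_mul, Complex.norm_exp]
  have hre : (-(((x:ℂ) + y)/2) * Complex.I).re = 0 := by simp
  rw [hre, Real.exp_zero, one_mul, h2, norm_neg, norm_mul, norm_mul]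
  have : (((x:ℂ) - y)/2) = (((x - y)/2 : ℝ) : ℂ) := by push_cast; ring
  rw [Complex.norm_two, Complex.norm_I, mul_one, this, ← Complex.ofReal_sin, Complex.norm_real, Real.norm_eq_abs]

lemma aux_scalar_key {φ x y : ℝ} (hφ0 : 0 < φ) (hφπ : φ < π)
    (hx : |x| ≤ π - φ) (hy : |y| ≤ π - φ) :
    Real.sin φ / (π - φ) * |x - y|
      ≤ ‖Complex.exp (-(x:ℂ) * Complex.I) - Complex.exp (-(y:ℂ) * Complex.I)‖ := by
  have ha : 0 < π - φ := by linarith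
  have haπ : π - φ ≤ π := by linarith
  have hsa : Real.sin (π - φ) = Real.sin φ := Real.sin_pi_sub φ
  have hta : |x - y| / 2 ≤ π - φ := by
    have h1 : |x - y| ≤ |x| + |y| := abs_sub x y
    linarith
  have hhalf : |(x - y)/2| = |x - y|/2 := by
    rw [abs_div]
    norm_num
  have hsin := aux_sin_lb ha haπ (t := |x - y| / 2) (by positivity) hta
  rw [hsa] at hsin
  rw [aux_cexp_diff, aux_abs_sin (by rw [hhalf]; linarith), hhalf]
  calc Real.sin φ / (π - φ) * |x - y|
      = 2 * (Real.sin φ / (π - φ) * (|x - y| / 2)) := by ring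
  _ ≤ 2 * Real.sin (|x - y| / 2) := by linarith

noncomputable def Sfr {n : ℕ} (X : Matrix (Fin n) (Fin n) ℂ) : ℝ :=
  ∑ j, ∑ k, ‖X j k‖ ^ 2

lemma Sfr_nonneg {n : ℕ} (X : Matrix (Fin n) (Fin n) ℂ) : 0 ≤ Sfr X := by
  unfold Sfr; positivity

lemma trace_eq_Sfr {n : ℕ} (X : Matrix (Fin n) (Fin n) ℂ) :
    (Xᴴ * X).trace = (Sfr X : ℂ) := by
  unfold Sfr
  simp only [Matrix.trace, Matrix.diag_apply, Matrix.mul_apply, Matrix.conjTranspose_apply]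
  push_cast
  rw [Finset.sum_comm]
  refine Finset.sum_congr rfl fun j _ => Finset.sum_congr rfl fun k _ => ?_
  rw [show star (X j k) = (starRingEnd ℂ) (X j k) from rfl, RCLike.conj_mul]
  norm_cast

lemma Sfr_conj {n : ℕ} (X : Matrix (Fin n) (Fin n) ℂ) {P Q : Matrix (Fin n) (Fin n) ℂ}
    (hP : P ∈ Matrix.unitaryGroup (Fin n) ℂ) (hQ : Q ∈ Matrix.unitaryGroup (Fin n) ℂ) :
    Sfr (Pᴴ * X * Q) = Sfr X := by
  have hPP : P * Pᴴ = 1 := hP.2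
  have hQQ : Q * Qᴴ = 1 := hQ.2
  have key : ((Pᴴ * X * Q)ᴴ * (Pᴴ * X * Q)).trace = (Xᴴ * X).trace := by
    have e1 : (Pᴴ * X * Q)ᴴ = Qᴴ * Xᴴ * P := by
      simp [Matrix.conjTranspose_mul, Matrix.mul_assoc]
    rw [e1]
    have e2 : Qᴴ * Xᴴ * P * (Pᴴ * X * Q) = Qᴴ * (Xᴴ * X) * Q := by
      simp only [← Matrix.mul_assoc]
      rw [Matrix.mul_assoc (Qᴴ * Xᴴ) P Pᴴ, hPP, Matrix.mul_one]
    rw [e2, Matrix.trace_mul_cycle, ← Matrix.mul_assoc, hQQ, Matrix.one_mul]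
  rw [trace_eq_Sfr, trace_eq_Sfr] at key
  exact_mod_cast key

lemma opNorm_le_sqrt_Sfr {n : ℕ} (X : Matrix (Fin n) (Fin n) ℂ) :
    ‖X‖ ≤ Real.sqrt (Sfr X) := by
  rw [Matrix.l2_opNorm_def]
  apply ContinuousLinearMap.opNorm_le_bound _ (Real.sqrt_nonneg _)
  intro x
  have hx : ‖(Matrix.toEuclideanLin.trans LinearMap.toContinuousLinearMap X) x‖
      = Real.sqrt (∑ j, ‖(X *ᵥ x) j‖ ^ 2) := by
    rw [LinearEquiv.trans_apply, LinearMap.coe_toContinuousLinearMap']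
    rw [EuclideanSpace.norm_eq]
    congr 1
  rw [hx]
  have hxn : ‖x‖ = Real.sqrt (∑ k, ‖x k‖ ^ 2) := by
    rw [EuclideanSpace.norm_eq]
  rw [hxn, ← Real.sqrt_mul (Sfr_nonneg X)]
  apply Real.sqrt_le_sqrt
  calc ∑ j, ‖(X *ᵥ x) j‖ ^ 2
      ≤ ∑ j, (∑ k, ‖X j k‖ ^ 2) * (∑ k, ‖x k‖ ^ 2) := by
        apply Finset.sum_le_sum
        intro j _
        have h1 : ‖(X *ᵥ x) j‖ ≤ ∑ k, ‖X j k‖ * ‖x k‖ := by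
          rw [Matrix.mulVec, dotProduct]
          refine (norm_sum_le _ _).trans ?_
          apply Finset.sum_le_sum
          intro k _
          rw [norm_mul]
        have h2 : (∑ k, ‖X j k‖ * ‖x k‖) ^ 2 ≤ (∑ k, ‖X j k‖ ^ 2) * (∑ k, ‖x k‖ ^ 2) :=
          Finset.sum_mul_sq_le_sq_mul_sq _ _ _
        calc ‖(X *ᵥ x) j‖ ^ 2 ≤ (∑ k, ‖X j k‖ * ‖x k‖) ^ 2 := by
              apply sq_le_sq' _ h1
              have : (0:ℝ) ≤ ∑ k, ‖X j k‖ * ‖x k‖ :=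
                Finset.sum_nonneg fun k _ => by positivity
              linarith [norm_nonneg ((X *ᵥ x) j)]
        _ ≤ _ := h2
  _ = Sfr X * ∑ k, ‖x k‖ ^ 2 := by rw [← Finset.sum_mul]; rfl

lemma entry_le_opNorm {n : ℕ} (X : Matrix (Fin n) (Fin n) ℂ) (j k : Fin n) :
    ‖X j k‖ ≤ ‖X‖ := by
  have h := X.l2_opNorm_mulVec (EuclideanSpace.single k (1:ℂ))
  rw [EuclideanSpace.norm_single, norm_one, mul_one] at h
  refine le_trans ?_ h
  have he : (EuclideanSpace.equiv (Fin n) ℂ).symm (X *ᵥ (EuclideanSpace.single k (1:ℂ)))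
      = (EuclideanSpace.equiv (Fin n) ℂ).symm (fun i => X i k) := by
    congr 1
    ext i
    simp [Matrix.mulVec, dotProduct, EuclideanSpace.single_apply]
  rw [he]
  have hne : ‖(EuclideanSpace.equiv (Fin n) ℂ).symm (fun i => X i k)‖
      = Real.sqrt (∑ i, ‖X i k‖ ^ 2) := by
    rw [EuclideanSpace.norm_eq]
    rfl
  rw [hne]
  have hle : ‖X j k‖ ^ 2 ≤ ∑ i, ‖X i k‖ ^ 2 :=
    Finset.single_le_sum (f := fun i => ‖X i k‖ ^ 2) (fun i _ => by positivity)
      (Finset.mem_univ j)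
  calc ‖X j k‖ = Real.sqrt (‖X j k‖ ^ 2) := (Real.sqrt_sq (norm_nonneg _)).symm
  _ ≤ _ := Real.sqrt_le_sqrt hle

lemma sqrt_Sfr_le_opNorm {n : ℕ} (X : Matrix (Fin n) (Fin n) ℂ) :
    Real.sqrt (Sfr X) ≤ n * ‖X‖ := by
  have h : Sfr X ≤ (n * ‖X‖) ^ 2 := by
    unfold Sfr
    calc ∑ j, ∑ k : Fin n, ‖X j k‖ ^ 2 ≤ ∑ j : Fin n, ∑ k : Fin n, ‖X‖ ^ 2 := by
          apply Finset.sum_le_sum; intro j _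
          apply Finset.sum_le_sum; intro k _
          have := entry_le_opNorm X j k
          have h0 := norm_nonneg (X j k)
          nlinarith
    _ = (n : ℝ) * n * ‖X‖ ^ 2 := by
          simp [Finset.sum_const, Finset.card_univ]
          ring
    _ = (n * ‖X‖) ^ 2 := by ring
  calc Real.sqrt (Sfr X) ≤ Real.sqrt ((n * ‖X‖) ^ 2) := Real.sqrt_le_sqrt h
  _ = n * ‖X‖ := Real.sqrt_sq (by positivity)

lemma aux_eig_bound {n : ℕ} {A : Matrix (Fin n) (Fin n) ℂ} (hA : A.IsHermitian) (i : Fin n) :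
    |hA.eigenvalues i| ≤ ‖A‖ := by
  have hx : ‖(hA.eigenvectorBasis i : EuclideanSpace ℂ (Fin n))‖ = 1 :=
    hA.eigenvectorBasis.orthonormal.1 i
  have h := A.l2_opNorm_mulVec (hA.eigenvectorBasis i)
  rw [hx, mul_one] at h
  have e : (EuclideanSpace.equiv (Fin n) ℂ).symm (A *ᵥ (hA.eigenvectorBasis i))
      = hA.eigenvalues i • (hA.eigenvectorBasis i : EuclideanSpace ℂ (Fin n)) :=
    congrArg (EuclideanSpace.equiv (Fin n) ℂ).symm (hA.mulVec_eigenvectorBasis i)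
  rw [e] at h
  calc |hA.eigenvalues i|
      = ‖hA.eigenvalues i • (hA.eigenvectorBasis i : EuclideanSpace ℂ (Fin n))‖ := by
        rw [norm_smul, hx, mul_one, Real.norm_eq_abs]
  _ ≤ ‖A‖ := h

lemma exp_hermitian {n : ℕ} {A : Matrix (Fin n) (Fin n) ℂ} (hA : A.IsHermitian) :
    NormedSpace.exp ((-Complex.I) • A)
      = (hA.eigenvectorUnitary : Matrix (Fin n) (Fin n) ℂ) *
        Matrix.diagonal (fun i => Complex.exp (-Complex.I * (hA.eigenvalues i : ℂ))) *
        (hA.eigenvectorUnitary : Matrix (Fin n) (Fin n) ℂ)ᴴ := by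
  set P : Matrix (Fin n) (Fin n) ℂ := (hA.eigenvectorUnitary : Matrix (Fin n) (Fin n) ℂ)
  have hP : P ∈ Matrix.unitaryGroup (Fin n) ℂ := hA.eigenvectorUnitary.2
  have hPinv : P⁻¹ = Pᴴ := Matrix.inv_eq_right_inv hP.2
  have hPu : IsUnit P := (⟨P, Pᴴ, hP.2, hP.1⟩ : (Matrix (Fin n) (Fin n) ℂ)ˣ).isUnit
  have hsp : A = P * Matrix.diagonal ((↑) ∘ hA.eigenvalues) * Pᴴ := hA.spectral_theorem
  have e1 : (-Complex.I) • A
      = P * Matrix.diagonal (fun i => -Complex.I * (hA.eigenvalues i : ℂ)) * P⁻¹ := by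
    rw [hPinv]
    conv_lhs => rw [hsp]
    rw [← smul_mul_assoc, ← mul_smul_comm]
    congr 2
    rw [← Matrix.diagonal_smul]
    congr 1
  rw [e1, Matrix.exp_conj P _ hPu, hPinv]
  congr 2
  rw [Matrix.exp_diagonal]
  congr 1
  funext i
  rw [Pi.exp_def]
  rw [← Complex.exp_eq_exp_ℂ]

/-- Local Lipschitz continuity of the principal matrix logarithm: for every dimension `n` and
`φ ∈ (0, π)` there is a constant `C > 0` such that for all Hermitian `A`, `B` with norm at most
`π - φ`, `‖A - B‖ ≤ C·‖exp(-i·A) - exp(-i·B)‖`. -/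
theorem stmt_7 (n : ℕ) (φ : ℝ) (hφ : φ ∈ Set.Ioo 0 π) :
    ∃ C : ℝ, 0 < C ∧ ∀ A B : Matrix (Fin n) (Fin n) ℂ,
      A.IsHermitian → B.IsHermitian → ‖A‖ ≤ π - φ → ‖B‖ ≤ π - φ →
      ‖A - B‖ ≤ C * ‖NormedSpace.exp ((-Complex.I) • A)
        - NormedSpace.exp ((-Complex.I) • B)‖ := by
  obtain ⟨hφ0, hφπ⟩ := hφ
  have hsinφ : 0 < Real.sin φ := Real.sin_pos_of_pos_of_lt_pi hφ0 hφπ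
  have ha : 0 < π - φ := by linarith
  set c : ℝ := Real.sin φ / (π - φ) with hc_def
  have hc : 0 < c := by positivity
  refine ⟨(n + 1) / c, by positivity, ?_⟩
  intro A B hA hB hAn hBn
  set U := NormedSpace.exp ((-Complex.I) • A) with hU_def
  set V := NormedSpace.exp ((-Complex.I) • B) with hV_def
  set P : Matrix (Fin n) (Fin n) ℂ := (hA.eigenvectorUnitary : Matrix (Fin n) (Fin n) ℂ) with hP_def
  set Q : Matrix (Fin n) (Fin n) ℂ := (hB.eigenvectorUnitary : Matrix (Fin n) (Fin n) ℂ) with hQ_def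
  have hP : P ∈ Matrix.unitaryGroup (Fin n) ℂ := hA.eigenvectorUnitary.2
  have hQ : Q ∈ Matrix.unitaryGroup (Fin n) ℂ := hB.eigenvectorUnitary.2
  have hP1 : Pᴴ * P = 1 := hP.1
  have hQ1 : Qᴴ * Q = 1 := hQ.1
  set R : Matrix (Fin n) (Fin n) ℂ := Pᴴ * Q with hR_def
  have hspA : A = P * Matrix.diagonal ((↑) ∘ hA.eigenvalues) * Pᴴ := hA.spectral_theorem
  have hspB : B = Q * Matrix.diagonal ((↑) ∘ hB.eigenvalues) * Qᴴ := hB.spectral_theorem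
  have hN : Pᴴ * (A - B) * Q
      = Matrix.diagonal ((↑) ∘ hA.eigenvalues) * R - R * Matrix.diagonal ((↑) ∘ hB.eigenvalues) := by
    rw [Matrix.mul_sub, Matrix.sub_mul]
    congr 1
    · conv_lhs => rw [hspA]
      simp only [← Matrix.mul_assoc]
      rw [hP1, Matrix.one_mul, Matrix.mul_assoc]
    · conv_lhs => rw [hspB]
      simp only [← Matrix.mul_assoc]
      rw [Matrix.mul_assoc _ Qᴴ Q, hQ1, Matrix.mul_one]
  have hUd : U = P * Matrix.diagonal (fun i => Complex.exp (-Complex.I * (hA.eigenvalues i : ℂ))) * Pᴴ :=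
    exp_hermitian hA
  have hVd : V = Q * Matrix.diagonal (fun i => Complex.exp (-Complex.I * (hB.eigenvalues i : ℂ))) * Qᴴ :=
    exp_hermitian hB
  have hM : Pᴴ * (U - V) * Q
      = Matrix.diagonal (fun i => Complex.exp (-Complex.I * (hA.eigenvalues i : ℂ))) * R
        - R * Matrix.diagonal (fun i => Complex.exp (-Complex.I * (hB.eigenvalues i : ℂ))) := by
    rw [Matrix.mul_sub, Matrix.sub_mul]
    congr 1
    · conv_lhs => rw [hUd]
      simp only [← Matrix.mul_assoc]
      rw [hP1, Matrix.one_mul, Matrix.mul_assoc]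
    · conv_lhs => rw [hVd]
      simp only [← Matrix.mul_assoc]
      rw [Matrix.mul_assoc _ Qᴴ Q, hQ1, Matrix.mul_one]
  have hkey : ∀ j k, c * ‖(Pᴴ * (A - B) * Q) j k‖ ≤ ‖(Pᴴ * (U - V) * Q) j k‖ := by
    intro j k
    rw [hN, hM]
    simp only [Matrix.sub_apply, Matrix.diagonal_mul, Matrix.mul_diagonal, Function.comp_apply]
    have e1 : ((hA.eigenvalues j : ℂ)) * R j k - R j k * (hB.eigenvalues k : ℂ)
        = ((hA.eigenvalues j : ℂ) - (hB.eigenvalues k : ℂ)) * R j k := by ring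
    have e2 : Complex.exp (-Complex.I * (hA.eigenvalues j : ℂ)) * R j k
          - R j k * Complex.exp (-Complex.I * (hB.eigenvalues k : ℂ))
        = (Complex.exp (-(hA.eigenvalues j : ℂ) * Complex.I)
            - Complex.exp (-(hB.eigenvalues k : ℂ) * Complex.I)) * R j k := by
      rw [show -Complex.I * (hA.eigenvalues j : ℂ) = -(hA.eigenvalues j : ℂ) * Complex.I by ring,
        show -Complex.I * (hB.eigenvalues k : ℂ) = -(hB.eigenvalues k : ℂ) * Complex.I by ring]
      ring
    rw [e1, e2, norm_mul, norm_mul]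
    have hx : |hA.eigenvalues j| ≤ π - φ := (aux_eig_bound hA j).trans hAn
    have hy : |hB.eigenvalues k| ≤ π - φ := (aux_eig_bound hB k).trans hBn
    have hs := aux_scalar_key hφ0 hφπ hx hy
    have hnorm1 : ‖((hA.eigenvalues j : ℂ) - (hB.eigenvalues k : ℂ))‖
        = |hA.eigenvalues j - hB.eigenvalues k| := by
      rw [← Complex.ofReal_sub, Complex.norm_real, Real.norm_eq_abs]
    rw [hnorm1, ← mul_assoc]
    apply mul_le_mul_of_nonneg_right _ (norm_nonneg (R j k))
    rw [show ‖Complex.exp (-(hA.eigenvalues j : ℂ) * Complex.I)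
          - Complex.exp (-(hB.eigenvalues k : ℂ) * Complex.I)‖
        = ‖Complex.exp (-(hA.eigenvalues j : ℂ) * Complex.I)
          - Complex.exp (-(hB.eigenvalues k : ℂ) * Complex.I)‖ from rfl]
    exact hs
  have hSfr : c ^ 2 * Sfr (Pᴴ * (A - B) * Q) ≤ Sfr (Pᴴ * (U - V) * Q) := by
    unfold Sfr
    rw [Finset.mul_sum]
    apply Finset.sum_le_sum
    intro j _
    rw [Finset.mul_sum]
    apply Finset.sum_le_sum
    intro k _
    have h := hkey j k
    have h2 := mul_self_le_mul_self
      (by positivity : (0:ℝ) ≤ c * ‖(Pᴴ * (A - B) * Q) j k‖) h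
    nlinarith [h2]
  rw [Sfr_conj _ hP hQ, Sfr_conj _ hP hQ] at hSfr
  have h1 : ‖A - B‖ ≤ Real.sqrt (Sfr (A - B)) := opNorm_le_sqrt_Sfr _
  have h2 : Real.sqrt (Sfr (A - B)) ≤ Real.sqrt (Sfr (U - V)) / c := by
    have hle : Sfr (A - B) ≤ Sfr (U - V) / c ^ 2 := by
      rw [le_div_iff₀ (by positivity)]
      linarith
    calc Real.sqrt (Sfr (A - B)) ≤ Real.sqrt (Sfr (U - V) / c ^ 2) := Real.sqrt_le_sqrt hle
    _ = Real.sqrt (Sfr (U - V)) / c := by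
        rw [Real.sqrt_div (Sfr_nonneg _), Real.sqrt_sq hc.le]
  have h3 : Real.sqrt (Sfr (U - V)) ≤ n * ‖U - V‖ := sqrt_Sfr_le_opNorm _
  calc ‖A - B‖ ≤ Real.sqrt (Sfr (A - B)) := h1
  _ ≤ Real.sqrt (Sfr (U - V)) / c := h2
  _ ≤ (n * ‖U - V‖) / c := by gcongr
  _ ≤ ((n + 1) / c) * ‖U - V‖ := by
      rw [div_mul_eq_mul_div]
      have hn : (n : ℝ) * ‖U - V‖ ≤ ((n : ℝ) + 1) * ‖U - V‖ := by
        have := norm_nonneg (U - V)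
        nlinarith
      exact div_le_div_of_nonneg_right hn hc.le |>.trans_eq rfl
end

section
/- For all θ, Φ ∈ ℝ, with H_± = cos²Φ·(σX⊗σX) + sin²Φ·(σY⊗σY) ± cosΦ·sinΦ·(σX⊗σY + σY⊗σX), the product B(θ, Φ) = exp(−i·θ·H₊)·exp(−i·θ·H₋) maps the basis vector |01⟩ to cos(2θ)·|01⟩ − i·sin(2θ)·|10⟩ and maps |10⟩ to −i·sin(2θ)·|01⟩ + cos(2θ)·|10⟩. In particular, the restriction of B(θ, Φ) to the odd-parity subspace span{|01⟩, |10⟩} equals exp(−i·2θ·X_odd) and is independent of Φ. -/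
open Kronecker Real

section general
variable {𝔸 : Type*} [NormedRing 𝔸] [NormedAlgebra ℂ 𝔸] [CompleteSpace 𝔸]

lemma exp_smul_idem (P : 𝔸) (hP : P * P = P) (c : ℂ) :
    NormedSpace.exp (c • P) = 1 + (Complex.exp c - 1) • P := by
  have hPn : ∀ n : ℕ, P ^ (n + 1) = P := by
    intro n
    induction n with
    | zero => simp
    | succ k ih => rw [pow_succ, ih, hP]
  have hsum := NormedSpace.expSeries_summable' (𝕂 := ℂ) (c • P)
  have h1 : NormedSpace.exp (c • P) = ∑' n : ℕ, ((n.factorial : ℂ)⁻¹) • (c • P) ^ n := by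
    rw [NormedSpace.exp_eq_tsum (𝕂 := ℂ)]
  rw [h1, hsum.tsum_eq_zero_add]
  have h2 : ∀ n : ℕ, (((n+1).factorial : ℂ)⁻¹) • (c • P) ^ (n+1)
      = ((((n+1).factorial : ℂ)⁻¹ * c ^ (n+1))) • P := by
    intro n
    rw [smul_pow, hPn, smul_smul]
  simp only [h2, pow_zero, Nat.factorial_zero, Nat.cast_one, inv_one, one_smul]
  congr 1
  have hs2 : Summable fun n : ℕ => ((n+1).factorial : ℂ)⁻¹ * c ^ (n+1) := by
    have := (NormedSpace.expSeries_summable' (𝕂 := ℂ) (c : ℂ))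
    simp only [smul_eq_mul] at this
    exact this.comp_injective (add_left_injective 1)
  rw [hs2.tsum_smul_const]
  congr 1
  have hc : Complex.exp c = ∑' n : ℕ, ((n.factorial : ℂ)⁻¹) * c ^ n := by
    rw [Complex.exp_eq_exp_ℂ, NormedSpace.exp_eq_tsum (𝕂 := ℂ)]
    simp [smul_eq_mul]
  have hsc : Summable fun n : ℕ => ((n.factorial : ℂ)⁻¹) * c ^ n := by
    have := (NormedSpace.expSeries_summable' (𝕂 := ℂ) (c : ℂ))
    simpa [smul_eq_mul] using this
  rw [hc, hsc.tsum_eq_zero_add]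
  simp

lemma exp_smul_invol (H : 𝔸) (hH : H * H = 1) (z : ℂ) :
    NormedSpace.exp (z • H) = Complex.cosh z • 1 + Complex.sinh z • H := by
  set P : 𝔸 := (2 : ℂ)⁻¹ • (1 + H) with hPdef
  have hP : P * P = P := by
    rw [hPdef, smul_mul_smul_comm, add_mul, one_mul, mul_add, mul_one, hH]
    have h4 : (1 : 𝔸) + H + (H + 1) = (2:ℂ) • (1 + H) := by
      rw [two_smul]; abel
    rw [h4, smul_smul]
    norm_num
  have hsplit : z • H = (2 * z) • P + (-z) • (1 : 𝔸) := by
    rw [hPdef, smul_smul, smul_add]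
    have : 2 * z * 2⁻¹ = z := by ring
    rw [this]
    rw [neg_smul, add_comm, ← add_assoc]
    abel
  have hcomm : Commute ((2 * z) • P) ((-z) • (1 : 𝔸)) := by
    apply Commute.smul_left
    apply Commute.smul_right
    exact Commute.one_right _
  letI : NormedAlgebra ℚ 𝔸 := NormedAlgebra.restrictScalars ℚ ℂ 𝔸
  rw [hsplit, NormedSpace.exp_add_of_commute hcomm, exp_smul_idem P hP]
  have h1 : NormedSpace.exp ((-z) • (1 : 𝔸)) = Complex.exp (-z) • 1 := by
    have : (-z) • (1 : 𝔸) = algebraMap ℂ 𝔸 (-z) := by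
      simp [Algebra.algebraMap_eq_smul_one]
    rw [this, ← NormedSpace.algebraMap_exp_comm, Algebra.algebraMap_eq_smul_one,
      Complex.exp_eq_exp_ℂ]
  rw [h1, hPdef]
  rw [add_mul, one_mul, smul_mul_assoc, mul_smul_comm, mul_one, smul_smul, smul_smul]
  have e1 : Complex.exp (2 * z) - 1 = Complex.exp z * Complex.exp z - 1 := by
    rw [two_mul, Complex.exp_add]
  rw [smul_add]
  have key1 : (Complex.exp (2*z) - 1) * Complex.exp (-z) * (2:ℂ)⁻¹ = Complex.sinh z := by
    have hne : Complex.exp z ≠ 0 := Complex.exp_ne_zero z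
    rw [Complex.sinh, e1, Complex.exp_neg]
    field_simp
  have key2 : Complex.exp (-z) + Complex.sinh z = Complex.cosh z := by
    rw [Complex.cosh, Complex.sinh, Complex.exp_neg]
    ring
  rw [key1, ← add_assoc, ← add_smul, key2]

end general


/-- Odd-sector action of the echoed SDF sequence: `B(θ,Φ) = exp(-i·θ·H₊)·exp(-i·θ·H₋)` maps
`|01⟩ ↦ cos(2θ)|01⟩ - i sin(2θ)|10⟩` and `|10⟩ ↦ -i sin(2θ)|01⟩ + cos(2θ)|10⟩`;
in particular its restriction to the odd-parity subspace is `exp(-i·2θ·X_odd)`,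
independent of `Φ`. -/
theorem stmt_11 (θ Φ : ℝ)
    (σX σY : Matrix (Fin 2) (Fin 2) ℂ)
    (hX : σX = !![0, 1; 1, 0]) (hY : σY = !![0, -Complex.I; Complex.I, 0])
    (Hp Hm B : Matrix (Fin 2 × Fin 2) (Fin 2 × Fin 2) ℂ)
    (hHp : Hp = ((Real.cos Φ) ^ 2 : ℂ) • (σX ⊗ₖ σX) + ((Real.sin Φ) ^ 2 : ℂ) • (σY ⊗ₖ σY)
      + ((Real.cos Φ * Real.sin Φ : ℝ) : ℂ) • (σX ⊗ₖ σY + σY ⊗ₖ σX))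
    (hHm : Hm = ((Real.cos Φ) ^ 2 : ℂ) • (σX ⊗ₖ σX) + ((Real.sin Φ) ^ 2 : ℂ) • (σY ⊗ₖ σY)
      - ((Real.cos Φ * Real.sin Φ : ℝ) : ℂ) • (σX ⊗ₖ σY + σY ⊗ₖ σX))
    (hB : B = NormedSpace.exp ((-(Complex.I * (θ : ℂ))) • Hp)
      * NormedSpace.exp ((-(Complex.I * (θ : ℂ))) • Hm))
    (e01 e10 : (Fin 2 × Fin 2) → ℂ)
    (he01 : e01 = Pi.single ((0 : Fin 2), (1 : Fin 2)) 1)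
    (he10 : e10 = Pi.single ((1 : Fin 2), (0 : Fin 2)) 1) :
    B.mulVec e01 = (Real.cos (2 * θ) : ℂ) • e01
        - (Complex.I * (Real.sin (2 * θ) : ℂ)) • e10 ∧
    B.mulVec e10 = -(Complex.I * (Real.sin (2 * θ) : ℂ)) • e01
        + (Real.cos (2 * θ) : ℂ) • e10 := by
  obtain ⟨c, hcd⟩ : ∃ c : ℂ, c = (Real.cos Φ : ℂ) := ⟨_, rfl⟩
  obtain ⟨s, hsd⟩ : ∃ s : ℂ, s = (Real.sin Φ : ℂ) := ⟨_, rfl⟩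
  have hone : c ^ 2 + s ^ 2 = 1 := by
    rw [hcd, hsd]; norm_cast; rw [add_comm]; exact Real.sin_sq_add_cos_sq Φ
  have cast1 : ((Real.cos Φ : ℝ) : ℂ) = c := hcd.symm
  have cast2 : ((Real.sin Φ : ℝ) : ℂ) = s := hsd.symm
  have cast3 : ((Real.cos Φ * Real.sin Φ : ℝ) : ℂ) = c * s := by
    rw [Complex.ofReal_mul, cast1, cast2]
  rw [cast1, cast2, cast3] at hHp hHm
  set Ap : Matrix (Fin 2) (Fin 2) ℂ := !![0, c - s*Complex.I; c + s*Complex.I, 0] with hAp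
  set Am : Matrix (Fin 2) (Fin 2) ℂ := !![0, c + s*Complex.I; c - s*Complex.I, 0] with hAm
  have hpA : Hp = Ap ⊗ₖ Ap := by
    rw [hHp, hX, hY, hAp]
    ext ⟨i, j⟩ ⟨k, l⟩
    simp only [Matrix.add_apply, Matrix.smul_apply, Matrix.kroneckerMap_apply, smul_eq_mul]
    fin_cases i <;> fin_cases j <;> fin_cases k <;> fin_cases l <;> simp <;>
      first
        | ring1
        | linear_combination -s ^ 2 * Complex.I_sq
        | linear_combination s ^ 2 * Complex.I_sq
  have hmA : Hm = Am ⊗ₖ Am := by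
    rw [hHm, hX, hY, hAm]
    ext ⟨i, j⟩ ⟨k, l⟩
    simp only [Matrix.sub_apply, Matrix.add_apply, Matrix.smul_apply,
      Matrix.kroneckerMap_apply, smul_eq_mul]
    fin_cases i <;> fin_cases j <;> fin_cases k <;> fin_cases l <;> simp <;>
      first
        | ring1
        | linear_combination -s ^ 2 * Complex.I_sq
        | linear_combination s ^ 2 * Complex.I_sq
  have hApsq : Ap * Ap = 1 := by
    ext i j
    fin_cases i <;> fin_cases j <;>
      simp [hAp, Matrix.mul_apply, Fin.sum_univ_two, Matrix.one_apply] <;>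
      linear_combination hone - s ^ 2 * Complex.I_sq
  have hAmsq : Am * Am = 1 := by
    ext i j
    fin_cases i <;> fin_cases j <;>
      simp [hAm, Matrix.mul_apply, Fin.sum_univ_two, Matrix.one_apply] <;>
      linear_combination hone - s ^ 2 * Complex.I_sq
  have hp2 : Hp * Hp = 1 := by
    rw [hpA, ← Matrix.mul_kronecker_mul, hApsq, Matrix.one_kronecker_one]
  have hm2 : Hm * Hm = 1 := by
    rw [hmA, ← Matrix.mul_kronecker_mul, hAmsq, Matrix.one_kronecker_one]
  have hp01 : Hp.mulVec e01 = e10 := by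
    rw [hpA, he01, he10]
    funext x
    obtain ⟨i, j⟩ := x
    fin_cases i <;> fin_cases j <;>
      simp [hAp, Matrix.mulVec, dotProduct, Fintype.sum_prod_type, Fin.sum_univ_two,
        Pi.single_apply] <;>
      linear_combination hone - s ^ 2 * Complex.I_sq
  have hp10 : Hp.mulVec e10 = e01 := by
    rw [hpA, he01, he10]
    funext x
    obtain ⟨i, j⟩ := x
    fin_cases i <;> fin_cases j <;>
      simp [hAp, Matrix.mulVec, dotProduct, Fintype.sum_prod_type, Fin.sum_univ_two,
        Pi.single_apply] <;>
      linear_combination hone - s ^ 2 * Complex.I_sq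
  have hm01 : Hm.mulVec e01 = e10 := by
    rw [hmA, he01, he10]
    funext x
    obtain ⟨i, j⟩ := x
    fin_cases i <;> fin_cases j <;>
      simp [hAm, Matrix.mulVec, dotProduct, Fintype.sum_prod_type, Fin.sum_univ_two,
        Pi.single_apply] <;>
      linear_combination hone - s ^ 2 * Complex.I_sq
  have hm10 : Hm.mulVec e10 = e01 := by
    rw [hmA, he01, he10]
    funext x
    obtain ⟨i, j⟩ := x
    fin_cases i <;> fin_cases j <;>
      simp [hAm, Matrix.mulVec, dotProduct, Fintype.sum_prod_type, Fin.sum_univ_two,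
        Pi.single_apply] <;>
      linear_combination hone - s ^ 2 * Complex.I_sq
  letI : SeminormedRing (Matrix (Fin 2 × Fin 2) (Fin 2 × Fin 2) ℂ) :=
    Matrix.linftyOpSemiNormedRing
  letI : NormedRing (Matrix (Fin 2 × Fin 2) (Fin 2 × Fin 2) ℂ) := Matrix.linftyOpNormedRing
  letI : NormedAlgebra ℂ (Matrix (Fin 2 × Fin 2) (Fin 2 × Fin 2) ℂ) :=
    Matrix.linftyOpNormedAlgebra
  have hcoshz : Complex.cosh (-(Complex.I * (θ : ℂ))) = (Real.cos θ : ℂ) := by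
    rw [mul_comm, Complex.cosh_neg, Complex.cosh_mul_I, Complex.ofReal_cos]
  have hsinhz : Complex.sinh (-(Complex.I * (θ : ℂ))) = -(Complex.I * (Real.sin θ : ℂ)) := by
    rw [mul_comm, Complex.sinh_neg, Complex.sinh_mul_I, Complex.ofReal_sin]
    ring
  have hEp : NormedSpace.exp ((-(Complex.I * (θ : ℂ))) • Hp)
      = (Real.cos θ : ℂ) • 1 + (-(Complex.I * (Real.sin θ : ℂ))) • Hp := by
    rw [← hcoshz, ← hsinhz]; exact exp_smul_invol Hp hp2 _
  have hEm : NormedSpace.exp ((-(Complex.I * (θ : ℂ))) • Hm)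
      = (Real.cos θ : ℂ) • 1 + (-(Complex.I * (Real.sin θ : ℂ))) • Hm := by
    rw [← hcoshz, ← hsinhz]; exact exp_smul_invol Hm hm2 _
  have hrw : ∀ v w : (Fin 2 × Fin 2) → ℂ, ∀ M : Matrix (Fin 2 × Fin 2) (Fin 2 × Fin 2) ℂ,
      M.mulVec v = w →
      ((Real.cos θ : ℂ) • 1 + (-(Complex.I * (Real.sin θ : ℂ))) • M).mulVec v
        = (Real.cos θ : ℂ) • v + (-(Complex.I * (Real.sin θ : ℂ))) • w := by
    intro v w M hM
    rw [Matrix.add_mulVec, Matrix.smul_mulVec, Matrix.smul_mulVec,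
      Matrix.one_mulVec, hM]
  have hcos2 : (Real.cos (2 * θ) : ℂ) = (Real.cos θ : ℂ) ^ 2 - (Real.sin θ : ℂ) ^ 2 := by
    rw [Real.cos_two_mul']; norm_cast
  have hsin2 : (Real.sin (2 * θ) : ℂ) = 2 * (Real.sin θ : ℂ) * (Real.cos θ : ℂ) := by
    rw [Real.sin_two_mul]; norm_cast
  constructor
  · rw [hB, ← Matrix.mulVec_mulVec, hEm, hEp,
      hrw e01 e10 Hm hm01, Matrix.mulVec_add, Matrix.mulVec_smul, Matrix.mulVec_smul,
      hrw e01 e10 Hp hp01, hrw e10 e01 Hp hp10, hcos2, hsin2]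
    match_scalars <;> first
      | ring1
      | linear_combination (Complex.sin (θ : ℂ)) ^ 2 * Complex.I_sq
      | linear_combination ((Real.sin θ : ℂ)) ^ 2 * Complex.I_sq
  · rw [hB, ← Matrix.mulVec_mulVec, hEm, hEp,
      hrw e10 e01 Hm hm10, Matrix.mulVec_add, Matrix.mulVec_smul, Matrix.mulVec_smul,
      hrw e10 e01 Hp hp10, hrw e01 e10 Hp hp01, hcos2, hsin2]
    match_scalars <;> first
      | ring1
      | linear_combination (Complex.sin (θ : ℂ)) ^ 2 * Complex.I_sq
      | linear_combination ((Real.sin θ : ℂ)) ^ 2 * Complex.I_sq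
end

section
/- For all θ, Φ ∈ ℝ, the 2×2 complex matrix identity exp(−i·θ·(cos(2Φ)·σX + sin(2Φ)·σY)) · exp(−i·θ·(cos(2Φ)·σX − sin(2Φ)·σY)) = !![d, −i·t; −i·t, conj(d)] holds, where d = cos²θ − sin²θ·e^{−4iΦ} and t = sin(2θ)·cos(2Φ). -/
open Real

/-- If `A * A = 1`, then `exp ((z*I) • A) = cos z • 1 + (sin z * I) • A`. -/
lemma exp_smul_of_sq_eq_one (A : Matrix (Fin 2) (Fin 2) ℂ) (hA : A * A = 1) (z : ℂ) :
    NormedSpace.exp ((z * Complex.I) • A)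
      = Complex.cos z • (1 : Matrix (Fin 2) (Fin 2) ℂ) + (Complex.sin z * Complex.I) • A := by
  have hpow_even : ∀ k : ℕ, A ^ (2 * k) = 1 := by
    intro k
    rw [pow_mul, pow_two, hA, one_pow]
  have hpow_odd : ∀ k : ℕ, A ^ (2 * k + 1) = A := by
    intro k
    rw [pow_succ, hpow_even, one_mul]
  have hsum : HasSum (fun n : ℕ => ((n.factorial : ℂ))⁻¹ • ((z * Complex.I) • A) ^ n)
      (Complex.cos z • (1 : Matrix (Fin 2) (Fin 2) ℂ) + (Complex.sin z * Complex.I) • A) := by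
    refine HasSum.even_add_odd ?_ ?_
    · have h := (Complex.hasSum_cos' z).smul_const (1 : Matrix (Fin 2) (Fin 2) ℂ)
      convert h using 2 with k
      rw [smul_pow, hpow_even, smul_smul]
      congr 1
      rw [div_eq_inv_mul]
    · have h := ((Complex.hasSum_sin' z).mul_right Complex.I).smul_const A
      convert h using 2 with k
      rw [smul_pow, hpow_odd, smul_smul]
      congr 1
      rw [div_mul_cancel₀ _ Complex.I_ne_zero, div_eq_inv_mul]
  rw [NormedSpace.exp_eq_tsum (𝕂 := ℂ)]
  exact hsum.tsum_eq

/-- Even-sector computation of the echoed SDF sequence: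
`exp(-iθ(cos2Φ·σX + sin2Φ·σY))·exp(-iθ(cos2Φ·σX - sin2Φ·σY)) = !![d, -it; -it, conj d]`
with `d = cos²θ - sin²θ·e^{-4iΦ}` and `t = sin(2θ)cos(2Φ)`. -/
theorem stmt_12 (θ Φ : ℝ)
    (σX σY : Matrix (Fin 2) (Fin 2) ℂ)
    (hX : σX = !![0, 1; 1, 0]) (hY : σY = !![0, -Complex.I; Complex.I, 0])
    (d : ℂ) (hd : d = ((Real.cos θ) ^ 2 : ℂ)
      - ((Real.sin θ) ^ 2 : ℂ) * Complex.exp (-(4 * (Φ : ℂ)) * Complex.I))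
    (t : ℝ) (ht : t = Real.sin (2 * θ) * Real.cos (2 * Φ)) :
    NormedSpace.exp ((-(Complex.I * (θ : ℂ))) •
        ((Real.cos (2 * Φ) : ℂ) • σX + (Real.sin (2 * Φ) : ℂ) • σY))
      * NormedSpace.exp ((-(Complex.I * (θ : ℂ))) •
        ((Real.cos (2 * Φ) : ℂ) • σX - (Real.sin (2 * Φ) : ℂ) • σY))
    = !![d, -Complex.I * (t : ℂ); -Complex.I * (t : ℂ), starRingEnd ℂ d] := by
  subst hX hY hd ht
  set c : ℂ := (Real.cos (2 * Φ) : ℂ) with hc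
  set s : ℂ := (Real.sin (2 * Φ) : ℂ) with hs
  have hcs : c ^ 2 + s ^ 2 = 1 := by
    rw [hc, hs]
    norm_cast
    rw [← Real.sin_sq_add_cos_sq (2 * Φ)]
    ring
  set A₁ : Matrix (Fin 2) (Fin 2) ℂ := !![0, c - Complex.I * s; c + Complex.I * s, 0] with hA₁
  set A₂ : Matrix (Fin 2) (Fin 2) ℂ := !![0, c + Complex.I * s; c - Complex.I * s, 0] with hA₂
  have hM₁ : c • !![(0:ℂ), 1; 1, 0] + s • !![0, -Complex.I; Complex.I, 0] = A₁ := by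
    rw [hA₁]; ext i j; fin_cases i <;> fin_cases j <;>
      simp [Matrix.smul_apply] <;> ring
  have hM₂ : c • !![(0:ℂ), 1; 1, 0] - s • !![0, -Complex.I; Complex.I, 0] = A₂ := by
    rw [hA₂]; ext i j; fin_cases i <;> fin_cases j <;>
      simp [Matrix.smul_apply] <;> ring
  have hsq : ∀ B : Matrix (Fin 2) (Fin 2) ℂ, (B = A₁ ∨ B = A₂) → B * B = 1 := by
    rintro B (rfl | rfl) <;>
    · ext i j
      fin_cases i <;> fin_cases j <;>
        simp [hA₁, hA₂, Matrix.mul_apply, Fin.sum_univ_two, Matrix.one_apply]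
      all_goals linear_combination hcs - s ^ 2 * Complex.I_sq
  have hz : (-(Complex.I * (θ : ℂ))) = ((-θ : ℝ) : ℂ) * Complex.I := by push_cast; ring
  rw [hM₁, hM₂, hz,
    exp_smul_of_sq_eq_one A₁ (hsq A₁ (Or.inl rfl)) ((-θ : ℝ) : ℂ),
    exp_smul_of_sq_eq_one A₂ (hsq A₂ (Or.inr rfl)) ((-θ : ℝ) : ℂ)]
  have hcos : Complex.cos ((-θ : ℝ) : ℂ) = ((Real.cos θ : ℝ) : ℂ) := by
    rw [← Complex.ofReal_cos, Real.cos_neg]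
  have hsin : Complex.sin ((-θ : ℝ) : ℂ) = -((Real.sin θ : ℝ) : ℂ) := by
    rw [← Complex.ofReal_sin, Real.sin_neg, Complex.ofReal_neg]
  rw [hcos, hsin]
  have hexp : Complex.exp (-(4 * (Φ : ℂ)) * Complex.I)
      = (c - Complex.I * s) ^ 2 := by
    rw [Complex.exp_mul_I, hc, hs]
    have h4 : (-(4 * (Φ : ℂ))) = ((-(4 * Φ) : ℝ) : ℂ) := by push_cast; ring
    rw [h4, ← Complex.ofReal_cos, ← Complex.ofReal_sin]
    have hc4 : Real.cos (-(4 * Φ)) = Real.cos (2*Φ) ^ 2 - Real.sin (2*Φ) ^ 2 := by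
      rw [Real.cos_neg]
      have : (4 : ℝ) * Φ = 2 * (2 * Φ) := by ring
      rw [this, Real.cos_two_mul', ]
    have hs4 : Real.sin (-(4 * Φ)) = -(2 * Real.sin (2*Φ) * Real.cos (2*Φ)) := by
      rw [Real.sin_neg]
      have : (4 : ℝ) * Φ = 2 * (2 * Φ) := by ring
      rw [this, Real.sin_two_mul]
    rw [hc4, hs4]
    simp only [Complex.ofReal_sub, Complex.ofReal_neg, Complex.ofReal_mul,
      Complex.ofReal_pow, Complex.ofReal_ofNat, ← hc, ← hs]
    linear_combination (-s ^ 2) * Complex.I_sq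
  have hconj : starRingEnd ℂ (((Real.cos θ) ^ 2 : ℂ)
      - ((Real.sin θ) ^ 2 : ℂ) * Complex.exp (-(4 * (Φ : ℂ)) * Complex.I))
      = ((Real.cos θ) ^ 2 : ℂ) - ((Real.sin θ) ^ 2 : ℂ) * (c + Complex.I * s) ^ 2 := by
    rw [hexp, hc, hs]
    simp only [map_sub, map_mul, map_pow, Complex.conj_ofReal, Complex.conj_I]
    ring
  rw [hconj, hexp]
  have hsin2 : ((Real.sin (2 * θ) : ℝ) : ℂ) = 2 * (Real.sin θ : ℂ) * (Real.cos θ : ℂ) := by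
    norm_cast
    rw [Real.sin_two_mul]
  have h2 : Complex.I ^ 2 = -1 := Complex.I_sq
  have h3 : Complex.I ^ 3 = -Complex.I := by rw [pow_succ, h2]; ring
  have h4 : Complex.I ^ 4 = 1 := by
    rw [pow_succ, h3]
    simp [Complex.I_mul_I]
  ext i j
  fin_cases i <;> fin_cases j <;>
    simp [Matrix.mul_apply, Fin.sum_univ_two, Matrix.one_apply, hA₁, hA₂, hsin2,
      Complex.ofReal_mul, -Complex.ofReal_cos, -Complex.ofReal_sin, ← hc]
  any_goals ring
  · linear_combination (Complex.ofReal (Real.sin θ)) ^ 2 * (c - Complex.I * s) ^ 2 * h2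
  · linear_combination (Complex.ofReal (Real.sin θ)) ^ 2 * (c + Complex.I * s) ^ 2 * h2
end

section
/- With θ = 3π/16 and Φ = (1/2)·arccos(√2 − 1), one has sin(2θ)·cos(2Φ) = sin(π/8) and |cos²θ − sin²θ·e^{−4iΦ}| = cos(π/8). -/
open Real

/-- Calibration conditions for the B gate: at `θ = 3π/16`, `Φ = ½ arccos(√2 - 1)`, the
even-sector block parameters satisfy `sin(2θ)cos(2Φ) = sin(π/8)` and
`|cos²θ - sin²θ·e^{-4iΦ}| = cos(π/8)`. -/
theorem stmt_14 (θ Φ : ℝ)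
    (hθ : θ = 3 * π / 16) (hΦ : Φ = (1 / 2) * Real.arccos (Real.sqrt 2 - 1)) :
    Real.sin (2 * θ) * Real.cos (2 * Φ) = Real.sin (π / 8) ∧
    ‖(((Real.cos θ) ^ 2 : ℂ)
        - ((Real.sin θ) ^ 2 : ℂ) * Complex.exp (-(4 * (Φ : ℂ)) * Complex.I))‖
      = Real.cos (π / 8) := by
  have hs2 : Real.sqrt 2 ^ 2 = 2 := Real.sq_sqrt (by norm_num)
  have hs2n : (0:ℝ) ≤ Real.sqrt 2 := Real.sqrt_nonneg 2
  have hs2le : Real.sqrt 2 ≤ 2 := by nlinarith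
  have hs2ge : (1:ℝ) ≤ Real.sqrt 2 := by nlinarith
  -- cos(2Φ) = √2 - 1
  have h2Φ : 2 * Φ = Real.arccos (Real.sqrt 2 - 1) := by rw [hΦ]; ring
  have hcos2Φ : Real.cos (2 * Φ) = Real.sqrt 2 - 1 := by
    rw [h2Φ]; exact Real.cos_arccos (by linarith) (by linarith)
  -- sin(2θ) = cos(π/8)
  have hsin2θ : Real.sin (2 * θ) = Real.cos (π / 8) := by
    rw [hθ]
    have : 2 * (3 * π / 16) = π / 2 - π / 8 := by ring
    rw [this, Real.sin_pi_div_two_sub]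
  -- key sqrt identity: √(2-√2) = √(2+√2) * (√2 - 1)
  have hkey : Real.sqrt (2 - Real.sqrt 2) = Real.sqrt (2 + Real.sqrt 2) * (Real.sqrt 2 - 1) := by
    have h1 : Real.sqrt (2 + Real.sqrt 2) * (Real.sqrt 2 - 1)
        = Real.sqrt ((2 + Real.sqrt 2) * (Real.sqrt 2 - 1) ^ 2) := by
      rw [Real.sqrt_mul (by linarith), Real.sqrt_sq (by linarith)]
    rw [h1]
    congr 1
    nlinarith
  constructor
  · rw [hsin2θ, hcos2Φ, Real.sin_pi_div_eight, Real.cos_pi_div_eight, hkey]; ring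
  · -- rewrite the complex number in the form x + y * I
    have h1 : (((Real.cos θ) ^ 2 : ℂ)
          - ((Real.sin θ) ^ 2 : ℂ) * Complex.exp (-(4 * (Φ : ℂ)) * Complex.I))
        = ((Real.cos θ ^ 2 - Real.sin θ ^ 2 * Real.cos (4*Φ) : ℝ) : ℂ)
          + ((Real.sin θ ^ 2 * Real.sin (4*Φ) : ℝ) : ℂ) * Complex.I := by
      have h2 : (-(4 * (Φ:ℂ)) * Complex.I) = ((-(4*Φ) : ℝ) : ℂ) * Complex.I := by
        push_cast; ring
      rw [h2, Complex.exp_mul_I, ← Complex.ofReal_cos, ← Complex.ofReal_sin,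
        Real.cos_neg, Real.sin_neg]
      push_cast
      ring
    rw [h1, Complex.norm_add_mul_I]
    -- numeric facts
    have hc4 : Real.cos (4 * Φ) = 5 - 4 * Real.sqrt 2 := by
      have : (4 : ℝ) * Φ = 2 * (2 * Φ) := by ring
      rw [this, Real.cos_two_mul, hcos2Φ]
      nlinarith
    have hpyth : Real.sin (4*Φ) ^ 2 = 1 - Real.cos (4*Φ) ^ 2 := by
      have := Real.sin_sq_add_cos_sq (4*Φ)
      linarith
    have hpyθ : Real.sin θ ^ 2 + Real.cos θ ^ 2 = 1 := Real.sin_sq_add_cos_sq θ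
    have hab : 2 * Real.sin θ * Real.cos θ = Real.cos (π / 8) := by
      rw [← Real.sin_two_mul, hsin2θ]
    have hc8sq : Real.cos (π / 8) ^ 2 = (2 + Real.sqrt 2) / 4 := by
      rw [Real.cos_pi_div_eight]
      rw [div_pow, Real.sq_sqrt (by linarith)]
      norm_num
    have hX : (Real.cos θ ^ 2 - Real.sin θ ^ 2 * Real.cos (4*Φ))^2
          + (Real.sin θ ^ 2 * Real.sin (4*Φ))^2 = Real.cos (π / 8) ^ 2 := by
      have habsq : (Real.sin θ * Real.cos θ)^2 = (2 + Real.sqrt 2) / 16 := by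
        linear_combination ((2 * Real.sin θ * Real.cos θ + Real.cos (π/8)) / 4) * hab
          + (1/4) * hc8sq
      rw [hc8sq]
      linear_combination (Real.sin θ^2)^2 * hpyth
        - 2 * Real.sin θ^2 * Real.cos θ^2 * hc4
        + (Real.sin θ^2 + Real.cos θ^2 + 1) * hpyθ
        - 2 * (6 - 4 * Real.sqrt 2) * habsq + (1/2) * hs2
    rw [hX, Real.sqrt_sq (Real.cos_nonneg_of_mem_Icc ⟨by linarith [Real.pi_pos], by
      linarith [Real.pi_pos]⟩)]
end

section
/- Let N ≥ 2 be even. On the space of 2^N × 2^N complex matrices, let K be the Kronecker product over sites i = 0, …, N−1 of σZ at each even site i and the 2×2 identity at each odd site, and for each i let XX_i be the Kronecker product placing σX at sites i and (i+1 mod N) and the identity at every other site. Then K is unitary and Hermitian and K · (∑_{i=0}^{N−1} XX_i) · K = −∑_{i=0}^{N−1} XX_i. -/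
/-- The Kronecker (tensor) product over sites `i = 0, …, N-1` of single-site `2×2` matrices,
as a matrix on `2^N`-dimensional space indexed by `Fin N → Fin 2`. -/
noncomputable def siteKron (N : ℕ) (f : Fin N → Matrix (Fin 2) (Fin 2) ℂ) :
    Matrix (Fin N → Fin 2) (Fin N → Fin 2) ℂ :=
  Matrix.of fun x y => ∏ i, f i (x i) (y i)

lemma siteKron_mul (N : ℕ) (f g : Fin N → Matrix (Fin 2) (Fin 2) ℂ) :
    siteKron N f * siteKron N g = siteKron N (fun i => f i * g i) := by
  ext x y
  simp only [siteKron, Matrix.mul_apply, Matrix.of_apply]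
  rw [Finset.prod_univ_sum]
  simp [Finset.prod_mul_distrib]

lemma siteKron_one (N : ℕ) : siteKron N (fun _ => 1) = 1 := by
  ext x y
  simp only [siteKron, Matrix.of_apply, Matrix.one_apply]
  by_cases h : x = y
  · subst h; simp
  · rw [if_neg h]
    obtain ⟨i, hi⟩ : ∃ i, x i ≠ y i := by
      by_contra hc; push_neg at hc; exact h (funext hc)
    exact Finset.prod_eq_zero (Finset.mem_univ i) (by simp [Matrix.one_apply, hi])

lemma siteKron_isHermitian (N : ℕ) (f : Fin N → Matrix (Fin 2) (Fin 2) ℂ)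
    (hf : ∀ i, (f i).IsHermitian) : (siteKron N f).IsHermitian := by
  ext x y
  simp only [siteKron, Matrix.conjTranspose_apply, Matrix.of_apply, star_prod]
  exact Finset.prod_congr rfl fun i _ => ((hf i).apply (x i) (y i))

lemma siteKron_neg (N : ℕ) (f g : Fin N → Matrix (Fin 2) (Fin 2) ℂ) (j0 : Fin N)
    (h0 : f j0 = -(g j0)) (h : ∀ j, j ≠ j0 → f j = g j) :
    siteKron N f = -(siteKron N g) := by
  ext x y
  simp only [siteKron, Matrix.of_apply, Matrix.neg_apply]
  rw [← Finset.prod_erase_mul _ _ (Finset.mem_univ j0),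
      ← Finset.prod_erase_mul _ _ (Finset.mem_univ j0), h0]
  rw [Finset.prod_congr rfl (fun j hj => by
    rw [h j (Finset.ne_of_mem_erase hj)])]
  simp [Matrix.neg_apply]

lemma zherm : (!![1, 0; 0, (-1:ℂ)]).IsHermitian := by
  ext i j; fin_cases i <;> fin_cases j <;> simp [Matrix.conjTranspose_apply]

lemma zz : !![1, 0; 0, (-1:ℂ)] * !![1, 0; 0, -1] = 1 := by
  norm_num [Matrix.mul_fin_two, ← Matrix.one_fin_two]

lemma zxz : !![1, 0; 0, (-1:ℂ)] * !![0, 1; 1, 0] * !![1, 0; 0, -1] = -!![0, 1; 1, 0] := by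
  norm_num [Matrix.mul_fin_two]

/-- Anti-commuting Pauli string for the periodic nearest-neighbor XX Hamiltonian: with
`K = ⊗_i (σZ at even sites, 𝟙 at odd sites)` and `XX_i` the operator placing `σX` at sites
`i` and `i+1 (mod N)`, `K` is unitary and Hermitian and `K (∑_i XX_i) K = -∑_i XX_i`. -/
theorem stmt_17 (N : ℕ) (hN : 2 ≤ N) (hNe : Even N)
    (σX σZ : Matrix (Fin 2) (Fin 2) ℂ)
    (hX : σX = !![0, 1; 1, 0]) (hZ : σZ = !![1, 0; 0, -1])
    (K : Matrix (Fin N → Fin 2) (Fin N → Fin 2) ℂ)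
    (hK : K = siteKron N fun i => if Even (i : ℕ) then σZ else 1)
    (XX : Fin N → Matrix (Fin N → Fin 2) (Fin N → Fin 2) ℂ)
    (hXX : ∀ i, XX i = siteKron N fun j => if j = i ∨ j = i + ⟨1, by omega⟩ then σX else 1) :
    K ∈ Matrix.unitaryGroup (Fin N → Fin 2) ℂ ∧ K.IsHermitian ∧
      K * (∑ i, XX i) * K = -∑ i, XX i := by
  have hZZ : σZ * σZ = 1 := by rw [hZ]; exact zz
  have hZXZ : σZ * σX * σZ = -σX := by rw [hZ, hX]; exact zxz
  have hKherm : K.IsHermitian := by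
    rw [hK]
    refine siteKron_isHermitian N _ fun i => ?_
    by_cases h : Even (i : ℕ)
    · simpa [h, hZ] using zherm
    · simpa [h] using Matrix.isHermitian_one
  have hKK : K * K = 1 := by
    rw [hK, siteKron_mul]
    have : (fun i : Fin N => (if Even (i:ℕ) then σZ else 1) * (if Even (i:ℕ) then σZ else 1))
        = fun _ => (1 : Matrix (Fin 2) (Fin 2) ℂ) := by
      funext i; by_cases h : Even (i:ℕ) <;> simp [h, hZZ]
    rw [this, siteKron_one]
  refine ⟨?_, hKherm, ?_⟩
  · rw [Matrix.mem_unitaryGroup_iff, Matrix.star_eq_conjTranspose, hKherm, hKK]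
  · have key : ∀ i, K * XX i * K = -(XX i) := by
      intro i
      rw [hK, hXX i, siteKron_mul, siteKron_mul]
      set i1 : Fin N := i + ⟨1, by omega⟩ with hi1
      have hv1 : (i1 : ℕ) = ((i:ℕ) + 1) % N := by simp [hi1, Fin.add_def]
      have hiN : (i:ℕ) < N := i.isLt
      have hcases : ((i:ℕ)+1 < N ∧ (i1:ℕ) = (i:ℕ)+1) ∨ ((i:ℕ)+1 = N ∧ (i1:ℕ) = 0) := by
        rcases lt_or_ge ((i:ℕ)+1) N with h | h
        · exact Or.inl ⟨h, by rw [hv1, Nat.mod_eq_of_lt h]⟩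
        · have hEq : (i:ℕ)+1 = N := by omega
          exact Or.inr ⟨hEq, by rw [hv1, hEq, Nat.mod_self]⟩
      obtain ⟨m, hm⟩ := hNe
      have hpar : Even ((i1:ℕ)) ↔ ¬ Even ((i:ℕ)) := by
        rcases hcases with ⟨h1, h2⟩ | ⟨h1, h2⟩ <;> rw [h2] <;>
          rw [Nat.even_iff, Nat.even_iff] <;> omega
      have hne : i1 ≠ i := by
        intro h
        have := congrArg Fin.val h
        rcases hcases with ⟨h1, h2⟩ | ⟨h1, h2⟩ <;> omega
      by_cases he : Even (i:ℕ)
      · refine siteKron_neg N _ _ i ?_ ?_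
        · simp [he, hZXZ]
        · intro j hj
          by_cases hj1 : j = i1
          · have h1o : ¬ Even ((i1:ℕ)) := fun h => (hpar.mp h) he
            simp [hj1, h1o, hj]
          · by_cases hje : Even ((j:ℕ)) <;> simp [hje, hj, hj1, hZZ]
      · have he1 : Even ((i1:ℕ)) := hpar.mpr he
        refine siteKron_neg N _ _ i1 ?_ ?_
        · simp [he1, hne, hZXZ]
        · intro j hj
          by_cases hj1 : j = i
          · simp [hj1, he]
          · by_cases hje : Even ((j:ℕ)) <;> simp [hje, hj, hj1, hZZ]
    rw [Finset.mul_sum, Finset.sum_mul]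
    simp only [key]
    exact Finset.sum_neg_distrib XX
end
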